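/- arXiv:1405.0954 — 7 statements merged into one kernel-verified Lean document; each statement's English description precedes it below -/
import Mathlib

section
/- Let A be a generalized Boolean algebra and S ⊆ A a nonempty subset. Suppose d is a least upper bound of S (IsLUB S d) and d' is a least upper bound of the set {d \ s | s ∈ S} (IsLUB ((fun s => d \ s) '' S) d'). Then d \ d' is a greatest lower bound of S (IsGLB S (d \ d')). -/
theorem ershov_glb_of_lub_sdiff {A : Type*} [GeneralizedBooleanAlgebra A] {S : Set A}
    (hS : S.Nonempty) {d d' : A} (hd : IsLUB S d)
    (hd' : IsLUB ((fun s => d \ s) '' S) d') : IsGLB S (d \ d') := by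
  constructor
  · intro s hs
    have hsd : s ≤ d := hd.1 hs
    have h1 : d \ s ≤ d' := hd'.1 ⟨s, hs, rfl⟩
    calc d \ d' ≤ d \ (d \ s) := sdiff_le_sdiff_left h1
    _ = d ⊓ s := sdiff_sdiff_right_self
    _ ≤ s := inf_le_right
  · intro c hc
    obtain ⟨s, hs⟩ := hS
    have hcd : c ≤ d := le_trans (hc hs) (hd.1 hs)
    have hub : d' ≤ d \ c := by
      apply hd'.2
      rintro _ ⟨t, ht, rfl⟩
      exact sdiff_le_sdiff_left (hc ht)
    rw [le_sdiff]
    exact ⟨hcd, disjoint_sdiff_self_right.mono_right hub⟩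
end

section
/- Every C-term function f in n variables over a generalized Boolean algebra A admits a disjunctive normal form: there exist m ≥ 1 and nonempty finite sets P₁, …, P_m of pairs of atomic functions such that for every v : Fin n → A, f v = the supremum over i ∈ {1,…,m} of the infimum over (p, q) ∈ P_i of (p v \ q v), where an atomic function is either a coordinate projection v ↦ v j (j : Fin n) or a constant function v ↦ c with c ∈ C. -/
/-- C-term functions in `n` variables over a generalized Boolean algebra `A`:
the smallest set of functions `(Fin n → A) → A` containing coordinate projections
and constants from `C`, closed under pointwise `⊔`, `⊓` and `\`. -/
inductive IsTermFun {A : Type*} [GeneralizedBooleanAlgebra A] (C : Set A) (n : ℕ) :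
    ((Fin n → A) → A) → Prop
  | proj (i : Fin n) : IsTermFun C n (fun v => v i)
  | const {c : A} (hc : c ∈ C) : IsTermFun C n (fun _ => c)
  | sup {f g : (Fin n → A) → A} : IsTermFun C n f → IsTermFun C n g →
      IsTermFun C n (fun v => f v ⊔ g v)
  | inf {f g : (Fin n → A) → A} : IsTermFun C n f → IsTermFun C n g →
      IsTermFun C n (fun v => f v ⊓ g v)
  | sdiff {f g : (Fin n → A) → A} : IsTermFun C n f → IsTermFun C n g →
      IsTermFun C n (fun v => f v \ g v)

/-- An atomic function is a coordinate projection or a constant from `C`. -/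
def IsAtomicFun {A : Type*} [GeneralizedBooleanAlgebra A] (C : Set A) (n : ℕ)
    (p : (Fin n → A) → A) : Prop :=
  (∃ j : Fin n, p = fun v => v j) ∨ ∃ c ∈ C, p = fun _ => c

section Aux

variable {A : Type*} [GeneralizedBooleanAlgebra A] {C : Set A} {n : ℕ}

/-- Nonempty clause: a nonempty finite set of pairs of functions. -/
abbrev ClauseT (A : Type*) [GeneralizedBooleanAlgebra A] (n : ℕ) :=
  {G : Finset (((Fin n → A) → A) × ((Fin n → A) → A)) // G.Nonempty}

/-- Evaluation of a clause: infimum of differences. -/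
def evalC (G : ClauseT A n) (v : Fin n → A) : A :=
  G.1.inf' G.2 (fun pq => pq.1 v \ pq.2 v)

/-- A clause is good if all its pairs are atomic. -/
def goodC (C : Set A) (G : ClauseT A n) : Prop :=
  ∀ pq ∈ G.1, IsAtomicFun C n pq.1 ∧ IsAtomicFun C n pq.2

/-- Has a disjunctive normal form. -/
def HasDNF (C : Set A) (n : ℕ) (f : (Fin n → A) → A) : Prop :=
  ∃ (T : Finset (ClauseT A n)) (hT : T.Nonempty),
    (∀ G ∈ T, goodC C G) ∧ ∀ v, f v = T.sup' hT (fun G => evalC G v)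

lemma HasDNF.congr {f g : (Fin n → A) → A} (hg : HasDNF C n g) (e : ∀ v, f v = g v) :
    HasDNF C n f := by
  obtain ⟨T, hT, good, e'⟩ := hg
  exact ⟨T, hT, good, fun v => by rw [e v, e' v]⟩

lemma hasDNF_atomic {p : (Fin n → A) → A} (hbot : ⊥ ∈ C)
    (hp : IsAtomicFun C n p) : HasDNF C n p := by
  refine ⟨{⟨{(p, fun _ => (⊥ : A))}, Finset.singleton_nonempty _⟩},
    Finset.singleton_nonempty _, ?_, ?_⟩
  · intro G hG pq hpq
    rw [Finset.mem_singleton] at hG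
    subst hG
    replace hpq : pq ∈ ({(p, fun _ => (⊥ : A))} : Finset _) := hpq
    rw [Finset.mem_singleton] at hpq
    subst hpq
    exact ⟨hp, Or.inr ⟨⊥, hbot, rfl⟩⟩
  · intro v
    simp [evalC]

lemma HasDNF.sup {f g : (Fin n → A) → A} (hf : HasDNF C n f) (hg : HasDNF C n g) :
    HasDNF C n (fun v => f v ⊔ g v) := by
  classical
  obtain ⟨T₁, h₁, good₁, e₁⟩ := hf
  obtain ⟨T₂, h₂, good₂, e₂⟩ := hg
  refine ⟨T₁ ∪ T₂, h₁.mono Finset.subset_union_left, ?_, ?_⟩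
  · intro G hG
    rcases Finset.mem_union.1 hG with h | h
    · exact good₁ G h
    · exact good₂ G h
  · intro v
    show f v ⊔ g v = _
    rw [e₁ v, e₂ v, Finset.sup'_union h₁ h₂]

lemma HasDNF.inf {f g : (Fin n → A) → A} (hf : HasDNF C n f) (hg : HasDNF C n g) :
    HasDNF C n (fun v => f v ⊓ g v) := by
  classical
  obtain ⟨T₁, h₁, good₁, e₁⟩ := hf
  obtain ⟨T₂, h₂, good₂, e₂⟩ := hg
  refine ⟨(T₁ ×ˢ T₂).image (fun GH => ⟨GH.1.1 ∪ GH.2.1, GH.1.2.mono Finset.subset_union_left⟩),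
    (h₁.product h₂).image _, ?_, ?_⟩
  · intro G hG
    rcases Finset.mem_image.1 hG with ⟨GH, hGH, rfl⟩
    rcases Finset.mem_product.1 hGH with ⟨hG1, hG2⟩
    intro pq hpq
    rcases Finset.mem_union.1 hpq with h | h
    · exact good₁ _ hG1 pq h
    · exact good₂ _ hG2 pq h
  · intro v
    show f v ⊓ g v = _
    rw [e₁ v, e₂ v, Finset.sup'_inf_sup', Finset.sup'_image]
    apply Finset.sup'_congr _ rfl
    intro GH _
    exact (Finset.inf'_union GH.1.2 GH.2.2 _).symm

lemma sup'_sdiff_right' {ι : Type*} (s : Finset ι) (hs : s.Nonempty)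
    (f : ι → A) (a : A) : s.sup' hs f \ a = s.sup' hs (fun i => f i \ a) := by
  induction hs using Finset.Nonempty.cons_induction with
  | singleton => rfl
  | cons b s hb hs ih => rw [Finset.sup'_cons hs, Finset.sup'_cons hs, sup_sdiff, ih]

lemma HasDNF.sdiff_atomic {f p : (Fin n → A) → A} (hf : HasDNF C n f)
    (hp : IsAtomicFun C n p) : HasDNF C n (fun v => f v \ p v) := by
  classical
  obtain ⟨T, hT, good, e⟩ := hf
  refine ⟨T.image (fun G => ⟨insert (G.2.choose.1, p) G.1, Finset.insert_nonempty _ _⟩), hT.image _, ?_, ?_⟩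
  · intro G' hG'
    rcases Finset.mem_image.1 hG' with ⟨G, hG, rfl⟩
    intro pq hpq
    rcases Finset.mem_insert.1 hpq with h | h
    · subst h
      exact ⟨(good G hG _ G.2.choose_spec).1, hp⟩
    · exact good G hG pq h
  · intro v
    have key : ∀ G ∈ T, evalC G v \ p v = (G.2.choose.1 v \ p v) ⊓ evalC G v := by
      intro G hG
      have hle : evalC G v ≤ G.2.choose.1 v :=
        le_trans (Finset.inf'_le _ G.2.choose_spec) sdiff_le
      apply le_antisymm
      · exact le_inf (sdiff_le_sdiff_right hle) sdiff_le
      · rw [le_sdiff]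
        exact ⟨inf_le_right, disjoint_sdiff_self_left.mono_left inf_le_left⟩
    show f v \ p v = _
    rw [Finset.sup'_image]
    calc f v \ p v = T.sup' hT (fun G => evalC G v) \ p v := by rw [e v]
      _ = T.sup' hT (fun G => evalC G v \ p v) := sup'_sdiff_right' T hT _ _
      _ = _ := by
          refine Finset.sup'_congr (H := hT) rfl (fun G hG => ?_)
          rw [key G hG]
          exact (Finset.inf'_insert (H := G.2)
            (f := fun pq => pq.1 v \ pq.2 v) (b := (G.2.choose.1, p))).symm

lemma hasDNF_sdiff_pair {f p q : (Fin n → A) → A} (hbot : ⊥ ∈ C) (hf : HasDNF C n f)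
    (hp : IsAtomicFun C n p) (hq : IsAtomicFun C n q) :
    HasDNF C n (fun v => f v \ (p v \ q v)) :=
  HasDNF.congr ((hf.sdiff_atomic hp).sup (hf.inf (hasDNF_atomic hbot hq)))
    (fun v => sdiff_sdiff_right')

lemma hasDNF_sdiff_inf' {f : (Fin n → A) → A} (hbot : ⊥ ∈ C)
    (s : Finset (((Fin n → A) → A) × ((Fin n → A) → A))) (hs : s.Nonempty)
    (hgood : ∀ pq ∈ s, IsAtomicFun C n pq.1 ∧ IsAtomicFun C n pq.2)
    (hf : HasDNF C n f) :
    HasDNF C n (fun v => f v \ s.inf' hs (fun pq => pq.1 v \ pq.2 v)) := by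
  induction hs using Finset.Nonempty.cons_induction generalizing f with
  | singleton pq =>
      refine HasDNF.congr (hasDNF_sdiff_pair hbot hf
        (hgood pq (Finset.mem_singleton_self _)).1
        (hgood pq (Finset.mem_singleton_self _)).2) (fun v => ?_)
      rw [Finset.inf'_singleton]
  | cons pq s hpq hs ih =>
      have h1 : HasDNF C n (fun v => f v \ (pq.1 v \ pq.2 v)) :=
        hasDNF_sdiff_pair hbot hf (hgood pq (Finset.mem_cons_self _ _)).1
          (hgood pq (Finset.mem_cons_self _ _)).2
      have h2 : HasDNF C n (fun v => f v \ s.inf' hs (fun pq => pq.1 v \ pq.2 v)) :=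
        ih (fun x hx => hgood x (Finset.mem_cons.2 (Or.inr hx))) hf
      refine HasDNF.congr (h1.sup h2) (fun v => ?_)
      rw [Finset.inf'_cons hs, sdiff_inf]

lemma HasDNF.sdiff {f g : (Fin n → A) → A} (hbot : ⊥ ∈ C)
    (hf : HasDNF C n f) (hg : HasDNF C n g) :
    HasDNF C n (fun v => f v \ g v) := by
  obtain ⟨T, hT, good, e⟩ := hg
  have main : ∀ (T : Finset (ClauseT A n)) (hT : T.Nonempty), (∀ G ∈ T, goodC C G) →
      ∀ f, HasDNF C n f → HasDNF C n (fun v => f v \ T.sup' hT (fun G => evalC G v)) := by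
    intro T hT
    induction hT using Finset.Nonempty.cons_induction with
    | singleton G =>
        intro good f hf
        refine HasDNF.congr (hasDNF_sdiff_inf' hbot G.1 G.2
          (good G (Finset.mem_singleton_self _)) hf) (fun v => ?_)
        rw [Finset.sup'_singleton]
        rfl
    | cons G T hG hT ih =>
        intro good f hf
        have h1 : HasDNF C n (fun v => f v \ evalC G v) :=
          HasDNF.congr (hasDNF_sdiff_inf' hbot G.1 G.2
            (good G (Finset.mem_cons_self _ _)) hf) (fun v => rfl)
        have h2 : HasDNF C n (fun v => (f v \ evalC G v) \ T.sup' hT (fun G => evalC G v)) :=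
          ih (fun x hx => good x (Finset.mem_cons.2 (Or.inr hx))) _ h1
        refine HasDNF.congr h2 (fun v => ?_)
        rw [Finset.sup'_cons hT, sdiff_sdiff_left]
  exact (main T hT good f hf).congr (fun v => by rw [e v])

lemma hasDNF_of_term {f : (Fin n → A) → A} (hbot : ⊥ ∈ C) (hf : IsTermFun C n f) :
    HasDNF C n f := by
  induction hf with
  | proj i => exact hasDNF_atomic hbot (Or.inl ⟨i, rfl⟩)
  | const hc => exact hasDNF_atomic hbot (Or.inr ⟨_, hc, rfl⟩)
  | sup _ _ ih₁ ih₂ => exact ih₁.sup ih₂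
  | inf _ _ ih₁ ih₂ => exact ih₁.inf ih₂
  | sdiff _ _ ih₁ ih₂ => exact ih₁.sdiff hbot ih₂

end Aux

theorem ershov_term_dnf {A : Type*} [GeneralizedBooleanAlgebra A] {C : Set A}
    (hbot : ⊥ ∈ C)
    (hsup : ∀ a ∈ C, ∀ b ∈ C, a ⊔ b ∈ C)
    (hinf : ∀ a ∈ C, ∀ b ∈ C, a ⊓ b ∈ C)
    (hsdiff : ∀ a ∈ C, ∀ b ∈ C, a \ b ∈ C)
    {n : ℕ} {f : (Fin n → A) → A} (hf : IsTermFun C n f) :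
    ∃ (m : ℕ), 1 ≤ m ∧
      ∃ (P : Fin m → Finset (((Fin n → A) → A) × ((Fin n → A) → A)))
        (hP : ∀ i, (P i).Nonempty),
        (∀ i, ∀ pq ∈ P i, IsAtomicFun C n pq.1 ∧ IsAtomicFun C n pq.2) ∧
        ∀ v : Fin n → A,
          f v = (Finset.univ : Finset (Fin m)).sup
            (fun i => (P i).inf' (hP i) (fun pq => pq.1 v \ pq.2 v)) := by
  classical
  obtain ⟨T, hT, good, e⟩ := hasDNF_of_term hbot hf
  refine ⟨T.card, Nat.one_le_iff_ne_zero.2 (by simpa using hT.card_pos.ne'), ?_⟩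
  set eq := T.equivFin with heq
  refine ⟨fun i => ((eq.symm i : {x // x ∈ T}) : ClauseT A n).1,
    fun i => ((eq.symm i : {x // x ∈ T}) : ClauseT A n).2, ?_, ?_⟩
  · intro i pq hpq
    exact good _ (eq.symm i).2 pq hpq
  · intro v
    rw [e v, Finset.sup'_eq_sup hT]
    calc T.sup (fun G => evalC G v)
        = T.attach.sup (fun x => evalC x.1 v) := (Finset.sup_attach T _).symm
      _ = ((Finset.univ : Finset (Fin T.card)).image eq.symm).sup (fun x => evalC x.1 v) := by
          rw [Finset.image_univ_equiv, Finset.attach_eq_univ]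
      _ = (Finset.univ : Finset (Fin T.card)).sup (fun i => evalC ((eq.symm i) : {x // x ∈ T}).1 v) :=
          Finset.sup_image _ _ _
      _ = _ := rfl
end

section
/- If C is finite, then for every n : ℕ the set of C-term functions in n variables over a generalized Boolean algebra A is finite. -/
section Aux

variable {B : Type*} [GeneralizedBooleanAlgebra B] [DecidableEq B]

/-- Closure of a set under `⊔`, `⊓`, `\`. -/
inductive GBAcl (S : Set B) : B → Prop
  | base {x : B} : x ∈ S → GBAcl S x
  | sup {x y : B} : GBAcl S x → GBAcl S y → GBAcl S (x ⊔ y)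
  | inf {x y : B} : GBAcl S x → GBAcl S y → GBAcl S (x ⊓ y)
  | sdiff {x y : B} : GBAcl S x → GBAcl S y → GBAcl S (x \ y)

private lemma inf_sdiff_inf' (a b c d : B) : (a \ b) ⊓ (c \ d) = (a ⊓ c) \ (b ⊔ d) := by
  apply le_antisymm
  · rw [le_sdiff]
    exact ⟨inf_le_inf sdiff_le sdiff_le,
      (disjoint_sup_right).2 ⟨(disjoint_sdiff_self_left).mono_left inf_le_left,
        (disjoint_sdiff_self_left).mono_left inf_le_right⟩⟩
  · exact le_inf (sdiff_le_sdiff inf_le_left le_sup_left)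
      (sdiff_le_sdiff inf_le_right le_sup_right)

private lemma inf_sdiff_assoc' (a b c : B) : (a \ b) ⊓ c = (a ⊓ c) \ b := by
  have := inf_sdiff_inf' a b c (⊥ : B)
  simpa using this

variable (s : Finset B)

/-- A local top: the join of all generators. -/
def wtop : B := s.sup id

/-- Meet of a finite set of elements, cut off at `wtop s`. -/
def mI (P : Finset B) : B := P.fold (· ⊓ ·) (wtop s) id

lemma mI_empty : mI s (∅ : Finset B) = wtop s := rfl

lemma mI_le_w (P : Finset B) : mI s P ≤ wtop s := by
  classical
  induction P using Finset.induction_on with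
  | empty => exact le_rfl
  | @insert _ _ h ih =>
    rw [mI, Finset.fold_insert h]
    exact le_trans inf_le_right ih

lemma mI_le {P : Finset B} {a : B} (h : a ∈ P) : mI s P ≤ a := by
  classical
  induction P using Finset.induction_on with
  | empty => exact absurd h (Finset.notMem_empty a)
  | @insert b P hb ih =>
    rw [mI, Finset.fold_insert hb]
    rcases Finset.mem_insert.1 h with rfl | h
    · exact inf_le_left
    · exact le_trans inf_le_right (ih h)

lemma le_mI {P : Finset B} {x : B} (hw : x ≤ wtop s) (h : ∀ a ∈ P, x ≤ a) :
    x ≤ mI s P := by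
  classical
  induction P using Finset.induction_on with
  | empty => exact hw
  | @insert b P hb ih =>
    rw [mI, Finset.fold_insert hb]
    exact le_inf (h b (Finset.mem_insert_self _ _))
      (ih fun a ha => h a (Finset.mem_insert_of_mem ha))

lemma mI_union (P Q : Finset B) : mI s (P ∪ Q) = mI s P ⊓ mI s Q := by
  apply le_antisymm
  · exact le_inf
      (le_mI s (mI_le_w s _) fun a ha => mI_le s (Finset.mem_union_left _ ha))
      (le_mI s (mI_le_w s _) fun a ha => mI_le s (Finset.mem_union_right _ ha))
  · refine le_mI s (le_trans inf_le_left (mI_le_w s _)) fun a ha => ?_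
    rcases Finset.mem_union.1 ha with h | h
    · exact le_trans inf_le_left (mI_le s h)
    · exact le_trans inf_le_right (mI_le s h)

lemma mI_insert (a : B) (P : Finset B) : mI s (insert a P) = a ⊓ mI s P := by
  apply le_antisymm
  · exact le_inf (mI_le s (Finset.mem_insert_self _ _))
      (le_mI s (mI_le_w s _) fun b hb => mI_le s (Finset.mem_insert_of_mem hb))
  · refine le_mI s (le_trans inf_le_right (mI_le_w s _)) fun b hb => ?_
    rcases Finset.mem_insert.1 hb with rfl | hb
    · exact inf_le_left
    · exact le_trans inf_le_right (mI_le s hb)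

/-- Interpretation of a monomial `(P, Q)` as `(⊓ P) \ (⊔ Q)`. -/
def interp (p : Finset B × Finset B) : B := mI s p.1 \ p.2.sup id

lemma interp_le_w (p : Finset B × Finset B) : interp s p ≤ wtop s :=
  le_trans sdiff_le (mI_le_w s _)

/-- Normal form: join of a finite set of monomials. -/
def NF (F : Finset (Finset B × Finset B)) : B := F.sup (interp s)

lemma NF_empty : NF s (∅ : Finset (Finset B × Finset B)) = ⊥ := rfl

lemma NF_union (F G : Finset (Finset B × Finset B)) :
    NF s (F ∪ G) = NF s F ⊔ NF s G := Finset.sup_union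

lemma NF_insert (q : Finset B × Finset B) (G : Finset (Finset B × Finset B)) :
    NF s (insert q G) = interp s q ⊔ NF s G := Finset.sup_insert

lemma mI_singleton (x : B) : mI s {x} = x ⊓ wtop s := by
  have h : ({x} : Finset B) = insert x ∅ := rfl
  rw [h, mI_insert, mI_empty]

lemma NF_le_w (F : Finset (Finset B × Finset B)) : NF s F ≤ wtop s :=
  Finset.sup_le fun p _ => interp_le_w s p

lemma interp_inf (p q : Finset B × Finset B) :
    interp s p ⊓ interp s q = interp s (p.1 ∪ q.1, p.2 ∪ q.2) := by
  rw [interp, interp, interp, inf_sdiff_inf', mI_union, Finset.sup_union]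

lemma sdiff_mI {m : B} (hm : m ≤ wtop s) (P : Finset B) :
    m \ mI s P = P.sup fun x => m \ x := by
  classical
  induction P using Finset.induction_on with
  | empty =>
    rw [mI_empty, Finset.sup_empty, sdiff_eq_bot_iff]
    exact hm
  | @insert a P ha ih =>
    rw [mI_insert, sdiff_inf, ih, Finset.sup_insert]

lemma interp_sdiff (p q : Finset B × Finset B) :
    interp s p \ interp s q =
      NF s ((q.1.image fun x => (p.1, insert x p.2)) ∪
            (q.2.image fun x => (insert x p.1, p.2))) := by
  have key1 : interp s p \ mI s q.1 = q.1.sup fun x => interp s (p.1, insert x p.2) := by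
    rw [sdiff_mI s (interp_le_w s p)]
    refine Finset.sup_congr rfl fun x _ => ?_
    rw [interp, interp, sdiff_sdiff_left, Finset.sup_insert, sup_comm, id]
  have key2 : interp s p ⊓ q.2.sup id = q.2.sup fun x => interp s (insert x p.1, p.2) := by
    rw [Finset.sup_inf_distrib_left]
    refine Finset.sup_congr rfl fun x _ => ?_
    rw [interp, interp, inf_sdiff_assoc', mI_insert, id, inf_comm (mI s p.1) x]
  rw [show interp s q = mI s q.1 \ q.2.sup id from rfl, sdiff_sdiff_right', key1, key2,
    NF, Finset.sup_union, Finset.sup_image, Finset.sup_image]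
  rfl

lemma NF_sdiff_interp (F : Finset (Finset B × Finset B)) (q : Finset B × Finset B) :
    NF s F \ interp s q = F.sup fun p => interp s p \ interp s q := by
  classical
  induction F using Finset.induction_on with
  | empty => simp [NF]
  | @insert a F ha ih =>
    rw [NF, Finset.sup_insert, sup_sdiff, Finset.sup_insert, ← ih]
    rfl

/-- Monomial goodness: components are subsets of the generators. -/
def Good (p : Finset B × Finset B) : Prop := p.1 ⊆ s ∧ p.2 ⊆ s

lemma NF_sdiff (G : Finset (Finset B × Finset B)) (hG : ∀ p ∈ G, Good s p) :
    ∀ F : Finset (Finset B × Finset B), (∀ p ∈ F, Good s p) →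
      ∃ H, (∀ p ∈ H, Good s p) ∧ NF s F \ NF s G = NF s H := by
  classical
  induction G using Finset.induction_on with
  | empty =>
    intro F hF
    exact ⟨F, hF, by simp [NF]⟩
  | @insert q G hq ih =>
    intro F hF
    have hqG : Good s q := hG q (Finset.mem_insert_self _ _)
    have hG' : ∀ p ∈ G, Good s p := fun p hp => hG p (Finset.mem_insert_of_mem hp)
    set F' : Finset (Finset B × Finset B) :=
      F.biUnion (fun p => (q.1.image fun x => (p.1, insert x p.2)) ∪
            (q.2.image fun x => (insert x p.1, p.2))) with hF'def
    have hF' : ∀ p ∈ F', Good s p := by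
      intro p' hp'
      rcases Finset.mem_biUnion.1 hp' with ⟨p, hp, hmem⟩
      rcases Finset.mem_union.1 hmem with h | h
      · rcases Finset.mem_image.1 h with ⟨x, hx, rfl⟩
        exact ⟨(hF p hp).1, Finset.insert_subset (hqG.1 hx) (hF p hp).2⟩
      · rcases Finset.mem_image.1 h with ⟨x, hx, rfl⟩
        exact ⟨Finset.insert_subset (hqG.2 hx) (hF p hp).1, (hF p hp).2⟩
    have step : NF s F \ interp s q = NF s F' := by
      rw [NF_sdiff_interp, hF'def, NF, Finset.sup_biUnion]
      exact Finset.sup_congr rfl fun p _ => interp_sdiff s p q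
    obtain ⟨H, hH, hHeq⟩ := ih hG' F' hF'
    refine ⟨H, hH, ?_⟩
    rw [NF_insert, ← sdiff_sdiff_left, step, hHeq]

lemma cl_repr {x : B} (hx : GBAcl (↑s : Set B) x) :
    ∃ F : Finset (Finset B × Finset B), (∀ p ∈ F, Good s p) ∧ x = NF s F := by
  classical
  induction hx with
  | @base x h =>
    refine ⟨{({x}, ∅)}, ?_, ?_⟩
    · intro p hp
      rw [Finset.mem_singleton] at hp
      subst hp
      exact ⟨Finset.singleton_subset_iff.2 h, Finset.empty_subset _⟩
    · have hxw : x ≤ wtop s := Finset.le_sup (f := id) h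
      rw [NF, Finset.sup_singleton, interp, mI_singleton]
      simp [inf_eq_left.2 hxw]
  | sup hf hg ihf ihg =>
    obtain ⟨F, hF, rfl⟩ := ihf
    obtain ⟨G, hG, rfl⟩ := ihg
    refine ⟨F ∪ G, ?_, (NF_union s F G).symm⟩
    intro p hp
    rcases Finset.mem_union.1 hp with h | h
    · exact hF p h
    · exact hG p h
  | inf hf hg ihf ihg =>
    obtain ⟨F, hF, rfl⟩ := ihf
    obtain ⟨G, hG, rfl⟩ := ihg
    refine ⟨(F ×ˢ G).image fun pq => (pq.1.1 ∪ pq.2.1, pq.1.2 ∪ pq.2.2), ?_, ?_⟩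
    · intro p hp
      rcases Finset.mem_image.1 hp with ⟨⟨a, b⟩, hab, rfl⟩
      rcases Finset.mem_product.1 hab with ⟨ha, hb⟩
      exact ⟨Finset.union_subset (hF _ ha).1 (hG _ hb).1,
        Finset.union_subset (hF _ ha).2 (hG _ hb).2⟩
    · rw [NF, NF, NF, Finset.sup_inf_distrib_right, Finset.sup_image, Finset.sup_product_left]
      refine Finset.sup_congr rfl fun p hp => ?_
      rw [Finset.sup_inf_distrib_left]
      exact Finset.sup_congr rfl fun q hq => interp_inf s p q
  | sdiff hf hg ihf ihg =>
    obtain ⟨F, hF, rfl⟩ := ihf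
    obtain ⟨G, hG, rfl⟩ := ihg
    obtain ⟨H, hH, hHeq⟩ := NF_sdiff s G hG F hF
    exact ⟨H, hH, hHeq⟩

theorem gba_closure_finite {S : Set B} (hS : S.Finite) : {x : B | GBAcl S x}.Finite := by
  classical
  set s := hS.toFinset with hs
  have hSs : S = (↑s : Set B) := (Set.Finite.coe_toFinset hS).symm
  have hsub : {x : B | GBAcl S x} ⊆
      (NF s) '' {F : Finset (Finset B × Finset B) | ∀ p ∈ F, Good s p} := by
    intro x hx
    rw [Set.mem_setOf, hSs] at hx
    obtain ⟨F, hF, rfl⟩ := cl_repr s hx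
    exact ⟨F, hF, rfl⟩
  have hfin : {F : Finset (Finset B × Finset B) | ∀ p ∈ F, Good s p}.Finite := by
    apply Set.Finite.subset ((s.powerset ×ˢ s.powerset).powerset.finite_toSet)
    intro F hF
    rw [Finset.mem_coe, Finset.mem_powerset]
    intro p hp
    rw [Finset.mem_product, Finset.mem_powerset, Finset.mem_powerset]
    exact hF p hp
  exact (hfin.image (NF s)).subset hsub

end Aux

theorem ershov_finitely_many_term_functions {A : Type*} [GeneralizedBooleanAlgebra A]
    {C : Set A}
    (hbot : ⊥ ∈ C)
    (hsup : ∀ a ∈ C, ∀ b ∈ C, a ⊔ b ∈ C)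
    (hinf : ∀ a ∈ C, ∀ b ∈ C, a ⊓ b ∈ C)
    (hsdiff : ∀ a ∈ C, ∀ b ∈ C, a \ b ∈ C)
    (hC : C.Finite) (n : ℕ) :
    {f : (Fin n → A) → A | IsTermFun C n f}.Finite := by
  classical
  set S : Set ((Fin n → A) → A) :=
    (Set.range fun i : Fin n => fun v : Fin n → A => v i) ∪
      ((fun c : A => fun _ : Fin n → A => c) '' C) with hSdef
  have hS : S.Finite := (Set.finite_range _).union (hC.image _)
  apply (gba_closure_finite hS).subset
  intro f hf
  simp only [Set.mem_setOf_eq] at hf ⊢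
  induction hf with
  | proj i => exact GBAcl.base (Or.inl ⟨i, rfl⟩)
  | const hc => exact GBAcl.base (Or.inr ⟨_, hc, rfl⟩)
  | sup _ _ ihf ihg => exact GBAcl.sup ihf ihg
  | inf _ _ ihf ihg => exact GBAcl.inf ihf ihg
  | sdiff _ _ ihf ihg => exact GBAcl.sdiff ihf ihg
end

section
/- A generalized Boolean algebra A is equationally Noetherian over its Ershov subalgebra of constants C if and only if C is finite. That is: (⇐) if C is finite then for every n and every system S of equations in n variables with constants in C there is a finite subset S₀ ⊆ S with the same solution set as S; (⇒) if C is infinite then there exist n and a system S in n variables such that no finite subset of S has the same solution set as S. -/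
open Finset


/-- Elements generated from `s` by `⊔`, `⊓`, `\`. -/
inductive GenBA {B : Type*} [GeneralizedBooleanAlgebra B] (s : Set B) : B → Prop
  | of {x : B} : x ∈ s → GenBA s x
  | sup {x y : B} : GenBA s x → GenBA s y → GenBA s (x ⊔ y)
  | inf {x y : B} : GenBA s x → GenBA s y → GenBA s (x ⊓ y)
  | sdiff {x y : B} : GenBA s x → GenBA s y → GenBA s (x \ y)

section BA
variable {B : Type*} [BooleanAlgebra B] {k : ℕ}

private def mintf (g : Fin k → B) (T : Finset (Fin k)) : B :=
  Finset.univ.inf fun i => if i ∈ T then g i else (g i)ᶜ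

lemma mt_le_mem (g : Fin k → B) {T : Finset (Fin k)} {i : Fin k} (h : i ∈ T) :
    mintf g T ≤ g i := by
  have := Finset.inf_le (f := fun i => if i ∈ T then g i else (g i)ᶜ) (Finset.mem_univ i)
  simpa [h, mintf] using this

lemma mt_le_not_mem (g : Fin k → B) {T : Finset (Fin k)} {i : Fin k} (h : i ∉ T) :
    mintf g T ≤ (g i)ᶜ := by
  have := Finset.inf_le (f := fun i => if i ∈ T then g i else (g i)ᶜ) (Finset.mem_univ i)
  simpa [h, mintf] using this

lemma mt_inf_mt (g : Fin k → B) {T T' : Finset (Fin k)} (h : T ≠ T') :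
    mintf g T ⊓ mintf g T' = ⊥ := by
  have : ∃ i, ¬ (i ∈ T ↔ i ∈ T') := by
    by_contra hc
    push_neg at hc
    exact h (Finset.ext fun i => hc i)
  obtain ⟨i, hi⟩ := this
  rcases Decidable.em (i ∈ T) with hT | hT
  · have hT' : i ∉ T' := fun h' => hi ⟨fun _ => h', fun _ => hT⟩
    have h1 : mintf g T ⊓ mintf g T' ≤ g i ⊓ (g i)ᶜ :=
      inf_le_inf (mt_le_mem g hT) (mt_le_not_mem g hT')
    simpa using le_bot_iff.mp (by simpa using h1)
  · have hT' : i ∈ T' := by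
      by_contra h'
      exact hi ⟨fun h'' => absurd h'' hT, fun h'' => absurd h'' h'⟩
    have h1 : mintf g T ⊓ mintf g T' ≤ (g i)ᶜ ⊓ g i :=
      inf_le_inf (mt_le_not_mem g hT) (mt_le_mem g hT')
    simpa using le_bot_iff.mp (by simpa using h1)

lemma powerset_sup_inf (g : Fin k → B) (s : Finset (Fin k)) :
    s.powerset.sup (fun T => s.inf fun i => if i ∈ T then g i else (g i)ᶜ) = ⊤ := by
  classical
  induction s using Finset.induction_on with
  | empty => simp
  | @insert a s ha ih =>
    rw [Finset.powerset_insert, Finset.sup_union, Finset.sup_image]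
    have h1 : ∀ T ∈ s.powerset,
        ((insert a s).inf fun i => if i ∈ T then g i else (g i)ᶜ)
          = (g a)ᶜ ⊓ (s.inf fun i => if i ∈ T then g i else (g i)ᶜ) := by
      intro T hT
      rw [Finset.inf_insert]
      have haT : a ∉ T := fun h => ha (Finset.mem_powerset.mp hT h)
      simp [haT]
    have h2 : ∀ T ∈ s.powerset,
        ((insert a s).inf fun i => if i ∈ insert a T then g i else (g i)ᶜ)
          = g a ⊓ (s.inf fun i => if i ∈ T then g i else (g i)ᶜ) := by
      intro T hT
      rw [Finset.inf_insert]
      simp only [Finset.mem_insert, true_or, if_pos]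
      congr 1
      refine Finset.inf_congr rfl fun i hi => ?_
      have : i ≠ a := fun h => ha (h ▸ hi)
      simp [this]
    have h2' : s.powerset.sup
        ((fun T => (insert a s).inf fun i => if i ∈ T then g i else (g i)ᶜ) ∘ insert a)
        = s.powerset.sup (fun T => g a ⊓ s.inf fun i => if i ∈ T then g i else (g i)ᶜ) :=
      Finset.sup_congr rfl fun T hT => h2 T hT
    rw [Finset.sup_congr rfl h1, h2',
      ← Finset.sup_inf_distrib_left, ← Finset.sup_inf_distrib_left, ih]
    simp

lemma sup_mt_univ (g : Fin k → B) :
    (Finset.univ : Finset (Finset (Fin k))).sup (mintf g) = ⊤ := by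
  have := powerset_sup_inf g Finset.univ
  rwa [Finset.powerset_univ] at this

lemma g_eq_sup_mt (g : Fin k → B) (i : Fin k) :
    g i = (Finset.univ.filter fun T : Finset (Fin k) => i ∈ T).sup (mintf g) := by
  apply le_antisymm
  · have : g i = g i ⊓ Finset.univ.sup (mintf g) := by rw [sup_mt_univ]; simp
    rw [this, Finset.sup_inf_distrib_left]
    refine Finset.sup_le fun T _ => ?_
    rcases Decidable.em (i ∈ T) with h | h
    · exact le_trans inf_le_right
        (Finset.le_sup (Finset.mem_filter.mpr ⟨Finset.mem_univ _, h⟩))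
    · have : g i ⊓ mintf g T ≤ g i ⊓ (g i)ᶜ := inf_le_inf_left _ (mt_le_not_mem g h)
      simpa using le_trans this (by simp)
  · exact Finset.sup_le fun T hT => mt_le_mem g (Finset.mem_filter.mp hT).2

lemma supmt_inf (g : Fin k → B) (S T : Finset (Finset (Fin k))) :
    S.sup (mintf g) ⊓ T.sup (mintf g) = (S ∩ T).sup (mintf g) := by
  classical
  apply le_antisymm
  · rw [Finset.sup_inf_distrib_right]
    refine Finset.sup_le fun U hU => ?_
    rw [Finset.sup_inf_distrib_left]
    refine Finset.sup_le fun V hV => ?_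
    rcases Decidable.em (U = V) with h | h
    · subst h
      rcases Decidable.em (U ∈ T) with h' | h'
      · exact le_trans inf_le_left (Finset.le_sup (Finset.mem_inter.mpr ⟨hU, h'⟩))
      · exact absurd hV h'
    · rw [inf_comm, mt_inf_mt g (fun h' => h h'.symm)]; exact bot_le
  · exact le_inf (Finset.sup_mono Finset.inter_subset_left)
      (Finset.sup_mono Finset.inter_subset_right)

lemma supmt_sdiff (g : Fin k → B) (S T : Finset (Finset (Fin k))) :
    S.sup (mintf g) \ T.sup (mintf g) = (S \ T).sup (mintf g) := by
  classical
  apply le_antisymm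
  · rw [sdiff_le_iff]
    refine Finset.sup_le fun U hU => ?_
    rcases Decidable.em (U ∈ T) with h | h
    · exact le_trans (Finset.le_sup h) le_sup_left
    · exact le_trans (Finset.le_sup (Finset.mem_sdiff.mpr ⟨hU, h⟩)) le_sup_right
  · refine Finset.sup_le fun U hU => ?_
    obtain ⟨hUS, hUT⟩ := Finset.mem_sdiff.mp hU
    rw [le_sdiff]
    refine ⟨Finset.le_sup hUS, Finset.disjoint_sup_right.mpr fun V hV => ?_⟩
    exact disjoint_iff.mpr (mt_inf_mt g fun h => hUT (h ▸ hV))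

lemma genBA_range_finite_ba (g : Fin k → B) :
    {x : B | GenBA (Set.range g) x}.Finite := by
  classical
  have hD : {x : B | GenBA (Set.range g) x}
      ⊆ Set.range fun S : Finset (Finset (Fin k)) => S.sup (mintf g) := by
    intro x hx
    induction hx with
    | of h =>
      obtain ⟨i, rfl⟩ := h
      exact ⟨Finset.univ.filter fun T => i ∈ T, (g_eq_sup_mt g i).symm⟩
    | sup _ _ ih1 ih2 =>
      obtain ⟨S, rfl⟩ := ih1; obtain ⟨T, rfl⟩ := ih2
      refine ⟨S ∪ T, ?_⟩
      simp [Finset.sup_union]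
    | inf _ _ ih1 ih2 =>
      obtain ⟨S, rfl⟩ := ih1; obtain ⟨T, rfl⟩ := ih2
      exact ⟨S ∩ T, (supmt_inf g S T).symm⟩
    | sdiff _ _ ih1 ih2 =>
      obtain ⟨S, rfl⟩ := ih1; obtain ⟨T, rfl⟩ := ih2
      exact ⟨S \ T, (supmt_sdiff g S T).symm⟩
  exact (Set.finite_range _).subset hD

end BA

section Part2
variable {B : Type*} [GeneralizedBooleanAlgebra B]


lemma genBA_lift {s : Set B} {x : B} (h : GenBA s x) :
    GenBA (Booleanisation.lift '' s) (Booleanisation.lift x) := by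
  induction h with
  | of h => exact GenBA.of ⟨_, h, rfl⟩
  | sup _ _ ih1 ih2 => exact GenBA.sup ih1 ih2
  | inf _ _ ih1 ih2 => exact GenBA.inf ih1 ih2
  | sdiff _ _ ih1 ih2 => exact GenBA.sdiff ih1 ih2

lemma genBA_range_finite {k : ℕ} (g : Fin k → B) :
    {x : B | GenBA (Set.range g) x}.Finite := by
  have hinj : Function.Injective (Booleanisation.lift : B → Booleanisation B) :=
    fun a b h => Sum.inl_injective h
  have h1 : {x : B | GenBA (Set.range g) x}
      ⊆ Booleanisation.lift ⁻¹' {y | GenBA (Set.range (Booleanisation.lift ∘ g)) y} := by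
    intro x hx
    have h := genBA_lift hx
    rw [← Set.range_comp] at h
    exact h
  exact ((genBA_range_finite_ba _).preimage hinj.injOn).subset h1

lemma genBA_finite {s : Set B} (hs : s.Finite) : {x : B | GenBA s x}.Finite := by
  rcases s.eq_empty_or_nonempty with rfl | hne
  · have : {x : B | GenBA (∅ : Set B) x} = ∅ := by
      ext x
      simp only [Set.mem_setOf_eq, Set.mem_empty_iff_false, iff_false]
      intro h
      induction h with
      | of h => exact h
      | sup _ _ ih1 _ => exact ih1
      | inf _ _ ih1 _ => exact ih1
      | sdiff _ _ ih1 _ => exact ih1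
    rw [this]; exact Set.finite_empty
  · obtain ⟨k, g, rfl⟩ : ∃ (k : ℕ) (g : Fin k → B), s = Set.range g := by
      haveI := hs.fintype
      obtain ⟨b, hb⟩ := hne
      classical
      refine ⟨hs.toFinset.card, fun i => (hs.toFinset.equivFin.symm i : B), ?_⟩
      ext x
      constructor
      · intro hx
        exact ⟨hs.toFinset.equivFin ⟨x, hs.mem_toFinset.mpr hx⟩, by simp⟩
      · rintro ⟨i, rfl⟩
        exact hs.mem_toFinset.mp (hs.toFinset.equivFin.symm i).2
    exact genBA_range_finite g
end Part2

section Part3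
variable {A : Type*} [GeneralizedBooleanAlgebra A]

def ESub (D : Set A) : Prop :=
  ⊥ ∈ D ∧ (∀ x ∈ D, ∀ y ∈ D, x ⊓ y ∈ D) ∧ (∀ x ∈ D, ∀ y ∈ D, x \ y ∈ D)

lemma eSub_step {D : Set A} (hD : ESub D ∧ D.Infinite) :
    ∃ q : A × Set A, q.1 ∈ D ∧ q.1 ≠ ⊥ ∧ q.2 ⊆ D ∧ (ESub q.2 ∧ q.2.Infinite) ∧
      ∀ x ∈ q.2, x ⊓ q.1 = ⊥ := by
  obtain ⟨⟨hbot, hinf, hsd⟩, hinfin⟩ := hD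
  by_cases hcase : ∃ a ∈ D, a ≠ ⊥ ∧ {x ∈ D | x ⊓ a = ⊥}.Infinite
  · obtain ⟨a, haD, hane, hainf⟩ := hcase
    refine ⟨(a, {x ∈ D | x ⊓ a = ⊥}), haD, hane, fun x hx => hx.1,
      ⟨⟨⟨hbot, by simp⟩, ?_, ?_⟩, hainf⟩, fun x hx => hx.2⟩
    · rintro x ⟨hxD, hxa⟩ y ⟨hyD, _⟩
      refine ⟨hinf x hxD y hyD, le_bot_iff.mp ?_⟩
      calc x ⊓ y ⊓ a ≤ x ⊓ a := inf_le_inf_right a inf_le_left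
        _ = ⊥ := hxa
    · rintro x ⟨hxD, hxa⟩ y ⟨hyD, _⟩
      refine ⟨hsd x hxD y hyD, le_bot_iff.mp ?_⟩
      calc (x \ y) ⊓ a ≤ x ⊓ a := inf_le_inf_right a sdiff_le
        _ = ⊥ := hxa
  · push_neg at hcase
    have key : ∀ a ∈ D, a ≠ ⊥ → (D ∩ Set.Iic a).Infinite := by
      intro a haD hane
      by_contra hfin
      rw [Set.not_infinite] at hfin
      have hDa := hcase a haD hane
      have himg : (fun x => (x ⊓ a, x \ a)) '' D ⊆ (D ∩ Set.Iic a) ×ˢ {x ∈ D | x ⊓ a = ⊥} := by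
        rintro _ ⟨x, hx, rfl⟩
        exact ⟨⟨hinf x hx a haD, inf_le_right⟩, hsd x hx a haD, inf_sdiff_self_left⟩
      have hinjOn : Set.InjOn (fun x => (x ⊓ a, x \ a)) D := by
        intro x hx y hy h
        have h1 : x ⊓ a = y ⊓ a := congrArg Prod.fst h
        have h2 : x \ a = y \ a := congrArg Prod.snd h
        rw [← sup_inf_sdiff x a, h1, h2, sup_inf_sdiff]
      exact hinfin (Set.Finite.of_finite_image
        (((hfin.prod hDa)).subset himg) hinjOn)
    obtain ⟨a, haD, hane⟩ : ∃ a ∈ D, a ≠ ⊥ := by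
      obtain ⟨a, ha⟩ := (hinfin.diff (Set.finite_singleton ⊥)).nonempty
      exact ⟨a, ha.1, by simpa using ha.2⟩
    obtain ⟨b, hb⟩ := ((key a haD hane).diff ((Set.finite_singleton a).insert ⊥)).nonempty
    obtain ⟨⟨hbD, hba⟩, hb2⟩ := hb
    have hbne : b ≠ ⊥ := fun h => hb2 (by simp [h])
    have hbnea : b ≠ a := fun h => hb2 (by simp [h])
    have hc : a \ b ≠ ⊥ := by
      intro h
      exact hbnea (le_antisymm hba (sdiff_eq_bot_iff.mp h))
    refine ⟨(a \ b, D ∩ Set.Iic b), hsd a haD b hbD, hc, Set.inter_subset_left,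
      ⟨⟨⟨hbot, bot_le⟩, ?_, ?_⟩, key b hbD hbne⟩, ?_⟩
    · rintro x ⟨hxD, hxb⟩ y ⟨hyD, _⟩
      exact ⟨hinf x hxD y hyD, le_trans inf_le_left hxb⟩
    · rintro x ⟨hxD, hxb⟩ y ⟨hyD, _⟩
      exact ⟨hsd x hxD y hyD, le_trans sdiff_le hxb⟩
    · rintro x ⟨_, hxb⟩
      refine le_bot_iff.mp ?_
      calc x ⊓ (a \ b) ≤ b ⊓ (a \ b) := inf_le_inf_right _ hxb
        _ = ⊥ := by rw [inf_comm]; exact inf_sdiff_self_left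

/-- From an infinite Ershov subalgebra, extract an infinite pairwise disjoint
family of nonzero elements. -/
lemma exists_disjoint_seq {C : Set A} (hC : ESub C) (hinf : C.Infinite) :
    ∃ c : ℕ → A, (∀ k, c k ∈ C) ∧ (∀ k, c k ≠ ⊥) ∧
      ∀ j k, j ≠ k → c j ⊓ c k = ⊥ := by
  classical
  let step : {D : Set A // ESub D ∧ D.Infinite} → A × {D : Set A // ESub D ∧ D.Infinite} :=
    fun p =>
      ⟨(eSub_step p.2).choose.1, ⟨(eSub_step p.2).choose.2, (eSub_step p.2).choose_spec.2.2.2.1⟩⟩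
  let Ds : ℕ → {D : Set A // ESub D ∧ D.Infinite} :=
    fun k => Nat.rec ⟨C, hC, hinf⟩ (fun _ p => (step p).2) k
  let c : ℕ → A := fun k => (step (Ds k)).1
  have hmem : ∀ k, c k ∈ (Ds k).1 := fun k => (eSub_step (Ds k).2).choose_spec.1
  have hne : ∀ k, c k ≠ ⊥ := fun k => (eSub_step (Ds k).2).choose_spec.2.1
  have hsub : ∀ k, (Ds (k + 1)).1 ⊆ (Ds k).1 := fun k =>
    (eSub_step (Ds k).2).choose_spec.2.2.1
  have hdisj : ∀ k, ∀ x ∈ (Ds (k + 1)).1, x ⊓ c k = ⊥ := fun k =>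
    (eSub_step (Ds k).2).choose_spec.2.2.2.2
  have hchain : ∀ k j, k ≤ j → (Ds j).1 ⊆ (Ds k).1 := by
    intro k j hkj
    induction j with
    | zero => rw [Nat.le_zero.mp hkj]
    | succ j ih =>
      rcases Nat.lt_or_ge k (j + 1) with h | h
      · exact (hsub j).trans (ih (Nat.lt_succ_iff.mp h))
      · rw [Nat.le_antisymm hkj h]
  have hCk : ∀ k, (Ds k).1 ⊆ C := fun k => hchain 0 k (Nat.zero_le k)
  have main : ∀ j k, k < j → c j ⊓ c k = ⊥ := by
    intro j k hkj
    exact hdisj k (c j) (hchain (k + 1) j hkj (hmem j))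
  refine ⟨c, fun k => hCk k (hmem k), hne, fun j k hjk => ?_⟩
  rcases Nat.lt_or_ge k j with h | h
  · exact main j k h
  · rw [inf_comm]; exact main k j (Nat.lt_of_le_of_ne h hjk)

end Part3



/-- The solution set of a system of equations in `n` variables. -/
def SolSet {A : Type*} [GeneralizedBooleanAlgebra A] {n : ℕ}
    (S : Set (((Fin n → A) → A) × ((Fin n → A) → A))) : Set (Fin n → A) :=
  {v | ∀ p ∈ S, p.1 v = p.2 v}

/-- `A` is equationally Noetherian over `C` if every system of equations with
constants in `C` is equivalent to one of its finite subsystems. -/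
def EquationallyNoetherian (A : Type*) [GeneralizedBooleanAlgebra A] (C : Set A) : Prop :=
  ∀ (n : ℕ) (S : Set (((Fin n → A) → A) × ((Fin n → A) → A))),
    (∀ p ∈ S, IsTermFun C n p.1 ∧ IsTermFun C n p.2) →
    ∃ S₀ ⊆ S, S₀.Finite ∧ SolSet S₀ = SolSet S

theorem ershov_equationally_noetherian_iff {A : Type*} [GeneralizedBooleanAlgebra A]
    {C : Set A}
    (hbot : ⊥ ∈ C)
    (hsup : ∀ a ∈ C, ∀ b ∈ C, a ⊔ b ∈ C)
    (hinf : ∀ a ∈ C, ∀ b ∈ C, a ⊓ b ∈ C)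
    (hsdiff : ∀ a ∈ C, ∀ b ∈ C, a \ b ∈ C) :
    EquationallyNoetherian A C ↔ C.Finite := by
  classical
  constructor
  · -- Noetherian → C finite
    intro hN
    by_contra hCfin
    have hCinf : C.Infinite := hCfin
    have hESub : ESub C := ⟨hbot, hinf, hsdiff⟩
    obtain ⟨c, hcC, hcne, hcdisj⟩ := exists_disjoint_seq hESub hCinf
    set pairF : ℕ → (((Fin 1 → A) → A) × ((Fin 1 → A) → A)) :=
      fun k => (fun v => v 0 ⊓ c k, fun _ => (⊥ : A)) with hpairF
    obtain ⟨S₀, hS₀sub, hS₀fin, hsol⟩ := hN 1 (Set.range pairF) (by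
      rintro p ⟨k, rfl⟩
      exact ⟨IsTermFun.inf (IsTermFun.proj 0) (IsTermFun.const (hcC k)),
        IsTermFun.const hbot⟩)
    haveI := hS₀fin.to_subtype
    set idx : S₀ → ℕ := fun p => (hS₀sub p.2).choose with hidx
    have hidxspec : ∀ p : S₀, pairF (idx p) = (p : _) := fun p => (hS₀sub p.2).choose_spec
    obtain ⟨m, hm⟩ : ∃ m, m ∉ Set.range idx :=
      ((Set.finite_range idx).infinite_compl).nonempty
    set v : Fin 1 → A := fun _ => c m with hv
    have hv0 : v ∈ SolSet S₀ := by
      intro p hp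
      have hk : pairF (idx ⟨p, hp⟩) = p := hidxspec ⟨p, hp⟩
      have hkm : idx ⟨p, hp⟩ ≠ m := fun h => hm ⟨⟨p, hp⟩, h⟩
      rw [← hk]
      show c m ⊓ c (idx ⟨p, hp⟩) = ⊥
      exact hcdisj m _ (fun h => hkm h.symm)
    have hv1 : v ∉ SolSet (Set.range pairF) := by
      intro h
      have := h (pairF m) ⟨m, rfl⟩
      simp only [hpairF] at this
      exact hcne m (by simpa [hv] using this)
    rw [hsol] at hv0
    exact hv1 hv0
  · -- C finite → Noetherian
    intro hCfin n S hS
    set s : Set ((Fin n → A) → A) :=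
      (Set.range fun i : Fin n => fun v : Fin n → A => v i) ∪
        ((fun c : A => fun _ : Fin n → A => c) '' C) with hgen
    have hsfin : s.Finite := (Set.finite_range _).union (hCfin.image _)
    have hterm : ∀ f : (Fin n → A) → A, IsTermFun C n f → GenBA s f := by
      intro f hf
      induction hf with
      | proj i => exact GenBA.of (Or.inl ⟨i, rfl⟩)
      | const hc => exact GenBA.of (Or.inr ⟨_, hc, rfl⟩)
      | sup _ _ ih1 ih2 => exact GenBA.sup ih1 ih2
      | inf _ _ ih1 ih2 => exact GenBA.inf ih1 ih2
      | sdiff _ _ ih1 ih2 => exact GenBA.sdiff ih1 ih2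
    have hTfin : {f : (Fin n → A) → A | GenBA s f}.Finite := genBA_finite hsfin
    have hSfin : S.Finite := by
      refine ((hTfin.prod hTfin).subset ?_)
      intro p hp
      exact ⟨hterm p.1 (hS p hp).1, hterm p.2 (hS p hp).2⟩
    exact ⟨S, subset_rfl, hSfin, rfl⟩
end

section
/- Let A be a generalized Boolean algebra that is weak equationally Noetherian over its Ershov subalgebra of constants C. Then for every subset D ⊆ C that has no upper bound in A, there exists c ∈ C such that {x ∈ A | ∀ d ∈ D, x ⊓ d = ⊥} = {x ∈ A | x ≤ c}. -/
/-- `A` is weak equationally Noetherian over `C` if every system of equations with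
constants in `C` is equivalent to some finite system (in the same variables). -/
def WeakEquationallyNoetherian (A : Type*) [GeneralizedBooleanAlgebra A] (C : Set A) : Prop :=
  ∀ (n : ℕ) (S : Set (((Fin n → A) → A) × ((Fin n → A) → A))),
    (∀ p ∈ S, IsTermFun C n p.1 ∧ IsTermFun C n p.2) →
    ∃ S' : Set (((Fin n → A) → A) × ((Fin n → A) → A)),
      S'.Finite ∧ (∀ p ∈ S', IsTermFun C n p.1 ∧ IsTermFun C n p.2) ∧
      SolSet S' = SolSet S

namespace EWAux

variable {A : Type*} [GeneralizedBooleanAlgebra A]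

theorem inf4 (p q r s : A) (hps : p ⊓ s = ⊥) (hqr : q ⊓ r = ⊥) :
    (p⊔q) ⊓ (r⊔s) = p⊓r ⊔ q⊓s := by
  rw [inf_sup_left, inf_sup_right, inf_sup_right, hps, hqr]
  simp [sup_assoc, sup_comm]

theorem sdiff4 (p q r s : A) (hps : p ⊓ s = ⊥) (hqr : q ⊓ r = ⊥) :
    (p⊔q) \ (r⊔s) = p\r ⊔ q\s := by
  rw [sup_sdiff, sdiff_sup, sdiff_sup,
    sdiff_eq_left.2 (disjoint_iff.2 hps), sdiff_eq_left.2 (disjoint_iff.2 hqr),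
    inf_comm (p\r) p, inf_of_le_right sdiff_le, inf_of_le_right sdiff_le]

theorem dA (x a b' : A) : (x⊓a) ⊓ (b'\x) = ⊥ :=
  disjoint_iff.1 (disjoint_sdiff_self_right.mono_left inf_le_left)
theorem dB (x a b' : A) : (x\a) ⊓ (b'\x) = ⊥ :=
  disjoint_iff.1 (disjoint_sdiff_self_right.mono_left sdiff_le)
theorem dC (x b a' : A) : (b\x) ⊓ (x⊓a') = ⊥ :=
  disjoint_iff.1 (disjoint_sdiff_self_left.mono_right inf_le_left)
theorem dD (x b a' : A) : (b\x) ⊓ (x\a') = ⊥ :=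
  disjoint_iff.1 (disjoint_sdiff_self_left.mono_right sdiff_le)

theorem bb1 (x b b' : A) : (b\x)⊓(b'\x) = (b⊓b')\x := by
  rw [← inf_sdiff_assoc, sdiff_inf_right_comm, sdiff_idem]
theorem bb2 (x b b' : A) : (b\x)\(b'\x) = (b\b')\x := by
  rw [sdiff_sdiff_right', inf_sdiff_self_left, sup_bot_eq, sdiff_right_comm]
theorem bb3 (x a a' : A) : (x⊓a)⊓(x⊓a') = x⊓(a⊓a') := (inf_inf_distrib_left x a a').symm
theorem bb4 (x a a' : A) : (x⊓a)⊓(x\a') = x⊓(a\a') := by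
  rw [← inf_sdiff_assoc, inf_right_comm, inf_idem, inf_sdiff_assoc]
theorem bb5 (x a a' : A) : (x\a)⊓(x\a') = x\(a⊔a') := by rw [← sdiff_sup]
theorem bb6 (x a a' : A) : (x⊓a)\(x⊓a') = x⊓(a\a') := by
  rw [sdiff_inf, sdiff_eq_bot_iff.2 inf_le_left, bot_sup_eq, inf_sdiff_assoc]
theorem bb7 (x a a' : A) : (x⊓a)\(x\a') = x⊓(a⊓a') := by
  rw [sdiff_sdiff_right', sdiff_eq_bot_iff.2 inf_le_left, bot_sup_eq, inf_assoc]
theorem bb8 (x a a' : A) : (x\a)\(x⊓a') = x\(a⊔a') := by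
  rw [sdiff_inf, sdiff_eq_bot_iff.2 sdiff_le, bot_sup_eq, sdiff_sdiff_left]
theorem bb9 (x a a' : A) : (x\a)\(x\a') = x⊓(a'\a) := by
  rw [sdiff_sdiff_right', sdiff_eq_bot_iff.2 sdiff_le, bot_sup_eq,
    sdiff_inf_right_comm, inf_sdiff_assoc]

theorem s11 (x a b a' b' : A) :
    ((x⊓a)⊔(b\x)) ⊔ ((x⊓a')⊔(b'\x)) = (x⊓(a⊔a')) ⊔ ((b⊔b')\x) := by
  rw [inf_sup_left, sup_sdiff]; ac_rfl
theorem s12 (x a b a' b' : A) :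
    ((x⊓a)⊔(b\x)) ⊔ ((x\a')⊔(b'\x)) = (x\(a'\a)) ⊔ ((b⊔b')\x) := by
  rw [sdiff_sdiff_right', sup_sdiff]; ac_rfl
theorem s21 (x a b a' b' : A) :
    ((x\a)⊔(b\x)) ⊔ ((x⊓a')⊔(b'\x)) = (x\(a\a')) ⊔ ((b⊔b')\x) := by
  rw [sdiff_sdiff_right', sup_sdiff]; ac_rfl
theorem s22 (x a b a' b' : A) :
    ((x\a)⊔(b\x)) ⊔ ((x\a')⊔(b'\x)) = (x\(a⊓a')) ⊔ ((b⊔b')\x) := by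
  rw [sdiff_inf, sup_sdiff]; ac_rfl
theorem i11 (x a b a' b' : A) :
    ((x⊓a)⊔(b\x)) ⊓ ((x⊓a')⊔(b'\x)) = (x⊓(a⊓a')) ⊔ ((b⊓b')\x) := by
  rw [inf4 _ _ _ _ (dA x a b') (dC x b a'), bb3, bb1]
theorem i12 (x a b a' b' : A) :
    ((x⊓a)⊔(b\x)) ⊓ ((x\a')⊔(b'\x)) = (x⊓(a\a')) ⊔ ((b⊓b')\x) := by
  rw [inf4 _ _ _ _ (dA x a b') (dD x b a'), bb4, bb1]
theorem i21 (x a b a' b' : A) :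
    ((x\a)⊔(b\x)) ⊓ ((x⊓a')⊔(b'\x)) = (x⊓(a'\a)) ⊔ ((b⊓b')\x) := by
  rw [inf4 _ _ _ _ (dB x a b') (dC x b a'), inf_comm (x\a), bb4, bb1]
theorem i22 (x a b a' b' : A) :
    ((x\a)⊔(b\x)) ⊓ ((x\a')⊔(b'\x)) = (x\(a⊔a')) ⊔ ((b⊓b')\x) := by
  rw [inf4 _ _ _ _ (dB x a b') (dD x b a'), bb5, bb1]
theorem d11 (x a b a' b' : A) :
    ((x⊓a)⊔(b\x)) \ ((x⊓a')⊔(b'\x)) = (x⊓(a\a')) ⊔ ((b\b')\x) := by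
  rw [sdiff4 _ _ _ _ (dA x a b') (dC x b a'), bb6, bb2]
theorem d12 (x a b a' b' : A) :
    ((x⊓a)⊔(b\x)) \ ((x\a')⊔(b'\x)) = (x⊓(a⊓a')) ⊔ ((b\b')\x) := by
  rw [sdiff4 _ _ _ _ (dA x a b') (dD x b a'), bb7, bb2]
theorem d21 (x a b a' b' : A) :
    ((x\a)⊔(b\x)) \ ((x⊓a')⊔(b'\x)) = (x\(a⊔a')) ⊔ ((b\b')\x) := by
  rw [sdiff4 _ _ _ _ (dB x a b') (dC x b a'), bb8, bb2]
theorem d22 (x a b a' b' : A) :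
    ((x\a)⊔(b\x)) \ ((x\a')⊔(b'\x)) = (x⊓(a'\a)) ⊔ ((b\b')\x) := by
  rw [sdiff4 _ _ _ _ (dB x a b') (dD x b a'), bb9, bb2]

/-- Normal form for unary term functions. -/
theorem normal_form {C : Set A}
    (hbot : ⊥ ∈ C)
    (hsup : ∀ a ∈ C, ∀ b ∈ C, a ⊔ b ∈ C)
    (hinf : ∀ a ∈ C, ∀ b ∈ C, a ⊓ b ∈ C)
    (hsdiff : ∀ a ∈ C, ∀ b ∈ C, a \ b ∈ C)
    {f : (Fin 1 → A) → A} (hf : IsTermFun C 1 f) :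
    ∃ a ∈ C, ∃ b ∈ C,
      (∀ v : Fin 1 → A, f v = (v 0 ⊓ a) ⊔ (b \ v 0)) ∨
      (∀ v : Fin 1 → A, f v = (v 0 \ a) ⊔ (b \ v 0)) := by
  induction hf with
  | proj i =>
      refine ⟨⊥, hbot, ⊥, hbot, Or.inr fun v => ?_⟩
      have : i = 0 := Subsingleton.elim i 0
      simp [this]
  | const hc =>
      exact ⟨_, hc, _, hc, Or.inl fun v => by
        rw [inf_comm, sup_inf_sdiff]⟩
  | sup hf hg ihf ihg =>
      obtain ⟨a, haC, b, hbC, h1⟩ := ihf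
      obtain ⟨a', haC', b', hbC', h2⟩ := ihg
      have hbb' := hsup b hbC b' hbC'
      rcases h1 with h1 | h1 <;> rcases h2 with h2 | h2
      · exact ⟨_, hsup a haC a' haC', _, hbb', Or.inl fun v => by
          simp only [h1, h2]; rw [s11]⟩
      · exact ⟨_, hsdiff a' haC' a haC, _, hbb', Or.inr fun v => by
          simp only [h1, h2]; rw [s12]⟩
      · exact ⟨_, hsdiff a haC a' haC', _, hbb', Or.inr fun v => by
          simp only [h1, h2]; rw [s21]⟩
      · exact ⟨_, hinf a haC a' haC', _, hbb', Or.inr fun v => by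
          simp only [h1, h2]; rw [s22]⟩
  | inf hf hg ihf ihg =>
      obtain ⟨a, haC, b, hbC, h1⟩ := ihf
      obtain ⟨a', haC', b', hbC', h2⟩ := ihg
      have hbb' := hinf b hbC b' hbC'
      rcases h1 with h1 | h1 <;> rcases h2 with h2 | h2
      · exact ⟨_, hinf a haC a' haC', _, hbb', Or.inl fun v => by
          simp only [h1, h2]; rw [i11]⟩
      · exact ⟨_, hsdiff a haC a' haC', _, hbb', Or.inl fun v => by
          simp only [h1, h2]; rw [i12]⟩
      · exact ⟨_, hsdiff a' haC' a haC, _, hbb', Or.inl fun v => by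
          simp only [h1, h2]; rw [i21]⟩
      · exact ⟨_, hsup a haC a' haC', _, hbb', Or.inr fun v => by
          simp only [h1, h2]; rw [i22]⟩
  | sdiff hf hg ihf ihg =>
      obtain ⟨a, haC, b, hbC, h1⟩ := ihf
      obtain ⟨a', haC', b', hbC', h2⟩ := ihg
      have hbb' := hsdiff b hbC b' hbC'
      rcases h1 with h1 | h1 <;> rcases h2 with h2 | h2
      · exact ⟨_, hsdiff a haC a' haC', _, hbb', Or.inl fun v => by
          simp only [h1, h2]; rw [d11]⟩
      · exact ⟨_, hinf a haC a' haC', _, hbb', Or.inl fun v => by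
          simp only [h1, h2]; rw [d12]⟩
      · exact ⟨_, hsup a haC a' haC', _, hbb', Or.inr fun v => by
          simp only [h1, h2]; rw [d21]⟩
      · exact ⟨_, hsdiff a' haC' a haC, _, hbb', Or.inl fun v => by
          simp only [h1, h2]; rw [d22]⟩

end EWAux

theorem ershov_weakNoetherian_unbounded {A : Type*} [GeneralizedBooleanAlgebra A]
    {C : Set A}
    (hbot : ⊥ ∈ C)
    (hsup : ∀ a ∈ C, ∀ b ∈ C, a ⊔ b ∈ C)
    (hinf : ∀ a ∈ C, ∀ b ∈ C, a ⊓ b ∈ C)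
    (hsdiff : ∀ a ∈ C, ∀ b ∈ C, a \ b ∈ C)
    (hW : WeakEquationallyNoetherian A C) :
    ∀ D ⊆ C, ¬ BddAbove D →
      ∃ c ∈ C, {x : A | ∀ d ∈ D, x ⊓ d = ⊥} = {x : A | x ≤ c} := by
  classical
  intro D hD hnb
  set S : Set (((Fin 1 → A) → A) × ((Fin 1 → A) → A)) :=
    (fun d => ((fun v : Fin 1 → A => v 0 ⊓ d), (fun _ : Fin 1 → A => (⊥ : A)))) '' D with hSdef
  have hSterms : ∀ p ∈ S, IsTermFun C 1 p.1 ∧ IsTermFun C 1 p.2 := by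
    rintro p ⟨d, hd, rfl⟩
    exact ⟨.inf (.proj 0) (.const (hD hd)), .const hbot⟩
  obtain ⟨S', hfin, hterms, hsol⟩ := hW 1 S hSterms
  have hSolS : SolSet S = {v : Fin 1 → A | ∀ d ∈ D, v 0 ⊓ d = ⊥} := by
    ext v
    simp [SolSet, hSdef]
  have hbotSol : (fun _ => (⊥ : A) : Fin 1 → A) ∈ SolSet S' := by
    rw [hsol, hSolS]
    intro d hd
    simp
  -- each equation in S' is equivalent to `x ⊓ a = ⊥` or `x ≤ a` for some `a ∈ C`
  have key : ∀ p ∈ S', ∃ a, a ∈ C ∧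
      ((∀ v : Fin 1 → A, (p.1 v = p.2 v ↔ v 0 ⊓ a = ⊥)) ∨
       (∀ v : Fin 1 → A, (p.1 v = p.2 v ↔ v 0 ≤ a))) := by
    intro p hp
    obtain ⟨h1, h2⟩ := hterms p hp
    have hh : IsTermFun C 1 (fun v => (p.1 v \ p.2 v) ⊔ (p.2 v \ p.1 v)) :=
      .sup (.sdiff h1 h2) (.sdiff h2 h1)
    obtain ⟨a, haC, b, hbC, hor⟩ := EWAux.normal_form hbot hsup hinf hsdiff hh
    have heqb : ∀ v : Fin 1 → A,
        (p.1 v = p.2 v ↔ (p.1 v \ p.2 v) ⊔ (p.2 v \ p.1 v) = ⊥) := by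
      intro v
      rw [sup_eq_bot_iff, sdiff_eq_bot_iff, sdiff_eq_bot_iff]
      constructor
      · rintro h; simp [h]
      · rintro ⟨ha, hb⟩; exact le_antisymm ha hb
    have hpbot : p.1 (fun _ => ⊥) = p.2 (fun _ => ⊥) := hbotSol p hp
    rcases hor with h | h
    · have hb : b = ⊥ := by
        have h0 := h (fun _ => ⊥)
        rw [(heqb _).1 hpbot] at h0
        simpa using h0.symm
      refine ⟨a, haC, Or.inl fun v => ?_⟩
      rw [heqb, h v, hb]
      simp
    · have hb : b = ⊥ := by
        have h0 := h (fun _ => ⊥)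
        rw [(heqb _).1 hpbot] at h0
        simpa using h0.symm
      refine ⟨a, haC, Or.inr fun v => ?_⟩
      rw [heqb, h v, hb]
      simp [sdiff_eq_bot_iff]
  choose! aa haaC hform using key
  set Q : (((Fin 1 → A) → A) × ((Fin 1 → A) → A)) → Prop :=
    fun p => ∀ v : Fin 1 → A, (p.1 v = p.2 v ↔ v 0 ≤ aa p) with hQdef
  set t := hfin.toFinset with htdef
  set f : (((Fin 1 → A) → A) × ((Fin 1 → A) → A)) → A :=
    fun p => if Q p then ⊥ else aa p with hfdef
  set astar := t.sup f with hastardef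
  have hmem_t : ∀ p, p ∈ t ↔ p ∈ S' := fun p => hfin.mem_toFinset
  have hfp_pos : ∀ p, Q p → f p = ⊥ := fun p hq => if_pos hq
  have hfp_neg : ∀ p, ¬ Q p → f p = aa p := fun p hq => if_neg hq
  have hastarC : astar ∈ C := by
    apply Finset.sup_induction hbot (fun a ha b hb => hsup a ha b hb)
    intro p hp
    by_cases hq : Q p
    · rw [hfp_pos p hq]; exact hbot
    · rw [hfp_neg p hq]; exact haaC p ((hmem_t p).1 hp)
  have hform1 : ∀ p ∈ S', ¬ Q p → ∀ v : Fin 1 → A, (p.1 v = p.2 v ↔ v 0 ⊓ aa p = ⊥) := by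
    intro p hp hq
    exact (hform p hp).resolve_right hq
  by_cases hQex : ∃ p ∈ t, Q p
  · -- there is an equation of the form x ≤ a
    obtain ⟨p0, hp0t, hp0Q⟩ := hQex
    have hne : (t.filter Q).Nonempty := ⟨p0, Finset.mem_filter.2 ⟨hp0t, hp0Q⟩⟩
    set c0 := (t.filter Q).inf' hne aa with hc0def
    have hc0C : c0 ∈ C :=
      Finset.inf'_mem C (fun a ha b hb => hinf a ha b hb) _ hne aa
        (fun p hp => haaC p ((hmem_t p).1 (Finset.mem_filter.1 hp).1))
    refine ⟨c0 \ astar, hsdiff c0 hc0C astar hastarC, ?_⟩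
    ext x
    have hxiff : (∀ d ∈ D, x ⊓ d = ⊥) ↔ (fun _ => x : Fin 1 → A) ∈ SolSet S' := by
      rw [hsol, hSolS]; exact Iff.rfl
    simp only [Set.mem_setOf_eq]
    rw [hxiff]
    constructor
    · intro hv
      have h1 : x ≤ c0 := by
        apply Finset.le_inf'
        intro p hp
        obtain ⟨hpt, hpQ⟩ := Finset.mem_filter.1 hp
        exact (hpQ (fun _ => x)).1 (hv p ((hmem_t p).1 hpt))
      have h2 : Disjoint x astar := by
        rw [hastardef]
        apply Finset.disjoint_sup_right.2
        intro p hp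
        by_cases hq : Q p
        · rw [hfp_pos p hq]; exact disjoint_bot_right
        · rw [hfp_neg p hq]
          exact disjoint_iff.2
            ((hform1 p ((hmem_t p).1 hp) hq (fun _ => x)).1 (hv p ((hmem_t p).1 hp)))
      exact le_sdiff.2 ⟨h1, h2⟩
    · intro hx p hp
      have hpt : p ∈ t := (hmem_t p).2 hp
      have hxast : Disjoint x astar :=
        disjoint_sdiff_self_left.mono_left hx
      by_cases hq : Q p
      · apply (hq (fun _ => x)).2
        have hc0le : c0 ≤ aa p := Finset.inf'_le _ (Finset.mem_filter.2 ⟨hpt, hq⟩)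
        exact le_trans (le_trans hx sdiff_le) hc0le
      · apply (hform1 p hp hq (fun _ => x)).2
        have hfp : aa p ≤ astar := by
          rw [← hfp_neg p hq, hastardef]
          exact Finset.le_sup hpt
        exact disjoint_iff.1 (hxast.mono_right hfp)
  · -- no equation of the form x ≤ a : contradiction with unboundedness
    push_neg at hQex
    exfalso
    apply hnb
    refine ⟨astar, fun d hd => ?_⟩
    have hdsol : (fun _ => d \ astar : Fin 1 → A) ∈ SolSet S' := by
      intro p hp
      have hpt : p ∈ t := (hmem_t p).2 hp
      have hq := hQex p hpt
      apply (hform1 p hp hq (fun _ => d \ astar)).2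
      have hfp : aa p ≤ astar := by
        rw [← hfp_neg p hq, hastardef]
        exact Finset.le_sup hpt
      exact disjoint_iff.1 (disjoint_sdiff_self_left.mono_right hfp)
    rw [hsol, hSolS] at hdsol
    have h2 := hdsol d hd
    rw [inf_eq_left.2 sdiff_le] at h2
    exact sdiff_eq_bot_iff.1 h2
end

section
/- Let A be a generalized Boolean algebra that is weak equationally Noetherian over its Ershov subalgebra of constants C. Then every subset D ⊆ C that has an upper bound in A has a least upper bound in A, and this least upper bound belongs to C; i.e. there exists d ∈ C with IsLUB D d. -/
/-! ### Auxiliary lattice lemmas -/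

section LatticeAux

variable {B : Type*} [GeneralizedBooleanAlgebra B]

private lemma aux_inf_eq_inf_iff (x u u' : B) :
    x ⊓ u = x ⊓ u' ↔ x ⊓ (u \ u' ⊔ u' \ u) = ⊥ := by
  constructor
  · intro h
    have h1 : x ⊓ (u \ u') = ⊥ := by
      rw [← inf_sdiff_assoc, h, inf_sdiff_assoc, sdiff_self, inf_bot_eq]
    have h2 : x ⊓ (u' \ u) = ⊥ := by
      rw [← inf_sdiff_assoc, ← h, inf_sdiff_assoc, sdiff_self, inf_bot_eq]
    rw [inf_sup_left, h1, h2, sup_bot_eq]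
  · intro h
    have h1 : x ⊓ (u \ u') = ⊥ :=
      le_bot_iff.1 (h ▸ inf_le_inf_left x le_sup_left)
    have h2 : x ⊓ (u' \ u) = ⊥ :=
      le_bot_iff.1 (h ▸ inf_le_inf_left x le_sup_right)
    have e1 : x ⊓ u = x ⊓ (u ⊓ u') := by
      conv_lhs => rw [← sup_inf_sdiff u u']
      rw [inf_sup_left, h1, sup_bot_eq]
    have e2 : x ⊓ u' = x ⊓ (u' ⊓ u) := by
      conv_lhs => rw [← sup_inf_sdiff u' u]
      rw [inf_sup_left, h2, sup_bot_eq]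
    rw [e1, e2, inf_comm u u']

end LatticeAux

section BoolAux

variable {B : Type*} [BooleanAlgebra B]

private lemma aux_bsup (x u₁ w₁ u₂ w₂ : B) :
    (x ⊓ u₁ ⊔ w₁ \ x) ⊔ (x ⊓ u₂ ⊔ w₂ \ x) = x ⊓ (u₁ ⊔ u₂) ⊔ (w₁ ⊔ w₂) \ x := by
  rw [inf_sup_left, sup_sdiff, sup_sup_sup_comm]

private lemma aux_binf (x u₁ w₁ u₂ w₂ : B) :
    (x ⊓ u₁ ⊔ w₁ \ x) ⊓ (x ⊓ u₂ ⊔ w₂ \ x) = x ⊓ (u₁ ⊓ u₂) ⊔ (w₁ ⊓ w₂) \ x := by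
  have h1 : x ⊓ u₁ ⊓ (x ⊓ u₂) = x ⊓ (u₁ ⊓ u₂) := by rw [inf_inf_inf_comm, inf_idem]
  have h2 : x ⊓ u₁ ⊓ (w₂ \ x) = ⊥ := by
    rw [inf_comm x u₁, inf_assoc, inf_sdiff_self_right, inf_bot_eq]
  have h3 : w₁ \ x ⊓ (x ⊓ u₂) = ⊥ := by
    rw [← inf_assoc, inf_sdiff_self_left, bot_inf_eq]
  have h4 : w₁ \ x ⊓ (w₂ \ x) = (w₁ ⊓ w₂) \ x := by
    rw [sdiff_eq, sdiff_eq, sdiff_eq, inf_inf_inf_comm, inf_idem]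
  rw [inf_sup_left, inf_sup_right, inf_sup_right, h1, h2, h3, h4, sup_bot_eq, bot_sup_eq]

private lemma aux_bsdiff (x u₁ w₁ u₂ w₂ : B) :
    (x ⊓ u₁ ⊔ w₁ \ x) \ (x ⊓ u₂ ⊔ w₂ \ x) = x ⊓ (u₁ \ u₂) ⊔ (w₁ \ w₂) \ x := by
  have h1 : (x ⊓ u₁) \ (x ⊓ u₂) = x ⊓ (u₁ \ u₂) := by
    rw [sdiff_eq, compl_inf, inf_sup_left, inf_right_comm, inf_compl_eq_bot, bot_inf_eq,
      bot_sup_eq, inf_assoc, ← sdiff_eq]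
  have h2 : (x ⊓ u₁) \ (w₂ \ x) = x ⊓ u₁ :=
    (disjoint_sdiff_self_right.mono_left inf_le_left).sdiff_eq_left
  have h3 : (w₁ \ x) \ (x ⊓ u₂) = w₁ \ x :=
    (disjoint_sdiff_self_left.mono_right inf_le_left).sdiff_eq_left
  have h4 : (w₁ \ x) \ (w₂ \ x) = (w₁ \ w₂) \ x := by
    rw [sdiff_sdiff_right', inf_sdiff_self_left, sup_bot_eq, sdiff_sdiff_comm]
  have h5 : x ⊓ (u₁ \ u₂) ⊓ (x ⊓ u₁) = x ⊓ (u₁ \ u₂) :=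
    inf_eq_left.2 (inf_le_inf_left x sdiff_le)
  have h6 : w₁ \ x ⊓ ((w₁ \ w₂) \ x) = (w₁ \ w₂) \ x :=
    inf_eq_right.2 (sdiff_le_sdiff_right sdiff_le)
  rw [sup_sdiff, sdiff_sup, sdiff_sup, h1, h2, h3, h4, h5, h6]

private lemma aux_decomp_eq_iff (x u w u' w' : B) :
    x ⊓ u ⊔ w \ x = x ⊓ u' ⊔ w' \ x ↔ x ⊓ u = x ⊓ u' ∧ w \ x = w' \ x := by
  have e : ∀ u w : B, x ⊓ (x ⊓ u ⊔ w \ x) = x ⊓ u := by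
    intro u w
    rw [inf_sup_left, ← inf_assoc, inf_idem, inf_sdiff_self_right, sup_bot_eq]
  have e' : ∀ u w : B, (x ⊓ u ⊔ w \ x) \ x = w \ x := by
    intro u w
    have hb : (x ⊓ u) \ x = ⊥ := sdiff_eq_bot_iff.2 inf_le_left
    rw [sup_sdiff, hb, sdiff_idem, bot_sup_eq]
  constructor
  · intro h
    exact ⟨by rw [← e u w, h, e u' w'], by rw [← e' u w, h, e' u' w']⟩
  · rintro ⟨h1, h2⟩
    rw [h1, h2]

private lemma aux_sdiff_eq_sdiff_iff (x w w' : B) :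
    w \ x = w' \ x ↔ w \ w' ⊔ w' \ w ≤ x := by
  have h : ∀ a b : B, a \ b = bᶜ ⊓ a := fun a b => by rw [sdiff_eq, inf_comm]
  rw [h w x, h w' x, aux_inf_eq_inf_iff, ← disjoint_iff, disjoint_compl_left_iff]

end BoolAux

/-! ### Normal form for one-variable term functions -/

/-- An element of the Booleanisation which is either (the image of) a constant
or the complement of a constant. -/
def GoodElt {A : Type*} [GeneralizedBooleanAlgebra A] (C : Set A)
    (x : Booleanisation A) : Prop :=
  (∃ c ∈ C, x = Booleanisation.lift c) ∨ (∃ c ∈ C, x = Booleanisation.comp c)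

section GoodElt

open Booleanisation

variable {A : Type*} [GeneralizedBooleanAlgebra A] {C : Set A}
  (hsup : ∀ a ∈ C, ∀ b ∈ C, a ⊔ b ∈ C)
  (hinf : ∀ a ∈ C, ∀ b ∈ C, a ⊓ b ∈ C)
  (hsdiff : ∀ a ∈ C, ∀ b ∈ C, a \ b ∈ C)
  {x y : Booleanisation A}

include hsup hinf hsdiff

private lemma GoodElt.sup (hx : GoodElt C x) (hy : GoodElt C y) : GoodElt C (x ⊔ y) := by
  rcases hx with ⟨c, hc, rfl⟩ | ⟨c, hc, rfl⟩ <;> rcases hy with ⟨d, hd, rfl⟩ | ⟨d, hd, rfl⟩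
  · exact Or.inl ⟨c ⊔ d, hsup c hc d hd, rfl⟩
  · exact Or.inr ⟨d \ c, hsdiff d hd c hc, rfl⟩
  · exact Or.inr ⟨c \ d, hsdiff c hc d hd, rfl⟩
  · exact Or.inr ⟨c ⊓ d, hinf c hc d hd, rfl⟩

private lemma GoodElt.inf (hx : GoodElt C x) (hy : GoodElt C y) : GoodElt C (x ⊓ y) := by
  rcases hx with ⟨c, hc, rfl⟩ | ⟨c, hc, rfl⟩ <;> rcases hy with ⟨d, hd, rfl⟩ | ⟨d, hd, rfl⟩
  · exact Or.inl ⟨c ⊓ d, hinf c hc d hd, rfl⟩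
  · exact Or.inl ⟨c \ d, hsdiff c hc d hd, rfl⟩
  · exact Or.inl ⟨d \ c, hsdiff d hd c hc, rfl⟩
  · exact Or.inr ⟨c ⊔ d, hsup c hc d hd, rfl⟩

private lemma GoodElt.sdiff (hx : GoodElt C x) (hy : GoodElt C y) : GoodElt C (x \ y) := by
  rcases hx with ⟨c, hc, rfl⟩ | ⟨c, hc, rfl⟩ <;> rcases hy with ⟨d, hd, rfl⟩ | ⟨d, hd, rfl⟩
  · exact Or.inl ⟨c \ d, hsdiff c hc d hd, rfl⟩
  · exact Or.inl ⟨c ⊓ d, hinf c hc d hd, rfl⟩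
  · exact Or.inr ⟨c ⊔ d, hsup c hc d hd, rfl⟩
  · exact Or.inl ⟨d \ c, hsdiff d hd c hc, rfl⟩

end GoodElt

section Normal

open Booleanisation

variable {A : Type*} [GeneralizedBooleanAlgebra A] {C : Set A}

private lemma termFun_normal
    (hbot : ⊥ ∈ C)
    (hsup : ∀ a ∈ C, ∀ b ∈ C, a ⊔ b ∈ C)
    (hinf : ∀ a ∈ C, ∀ b ∈ C, a ⊓ b ∈ C)
    (hsdiff : ∀ a ∈ C, ∀ b ∈ C, a \ b ∈ C)
    {f : (Fin 1 → A) → A} (hf : IsTermFun C 1 f) :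
    ∃ u w : Booleanisation A, GoodElt C u ∧ GoodElt C w ∧
      ∀ v : Fin 1 → A, lift (f v) = lift (v 0) ⊓ u ⊔ w \ lift (v 0) := by
  induction hf with
  | proj i =>
    refine ⟨⊤, ⊥, Or.inr ⟨⊥, hbot, rfl⟩, Or.inl ⟨⊥, hbot, rfl⟩, fun v => ?_⟩
    have hi : i = 0 := Subsingleton.elim _ _
    subst hi
    simp
  | @const c hc =>
    refine ⟨lift c, lift c, Or.inl ⟨c, hc, rfl⟩, Or.inl ⟨c, hc, rfl⟩, fun v => ?_⟩
    show lift c = lift (v 0) ⊓ lift c ⊔ lift c \ lift (v 0)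
    rw [inf_comm, sup_inf_sdiff]
  | sup hf' hg' ihf ihg =>
    obtain ⟨u₁, w₁, hu₁, hw₁, h₁⟩ := ihf
    obtain ⟨u₂, w₂, hu₂, hw₂, h₂⟩ := ihg
    refine ⟨u₁ ⊔ u₂, w₁ ⊔ w₂, GoodElt.sup hsup hinf hsdiff hu₁ hu₂,
      GoodElt.sup hsup hinf hsdiff hw₁ hw₂, fun v => ?_⟩
    show lift (_ ⊔ _) = _
    rw [← lift_sup_lift, h₁ v, h₂ v, aux_bsup]
  | inf hf' hg' ihf ihg =>
    obtain ⟨u₁, w₁, hu₁, hw₁, h₁⟩ := ihf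
    obtain ⟨u₂, w₂, hu₂, hw₂, h₂⟩ := ihg
    refine ⟨u₁ ⊓ u₂, w₁ ⊓ w₂, GoodElt.inf hsup hinf hsdiff hu₁ hu₂,
      GoodElt.inf hsup hinf hsdiff hw₁ hw₂, fun v => ?_⟩
    show lift (_ ⊓ _) = _
    rw [← lift_inf_lift, h₁ v, h₂ v, aux_binf]
  | sdiff hf' hg' ihf ihg =>
    obtain ⟨u₁, w₁, hu₁, hw₁, h₁⟩ := ihf
    obtain ⟨u₂, w₂, hu₂, hw₂, h₂⟩ := ihg
    refine ⟨u₁ \ u₂, w₁ \ w₂, GoodElt.sdiff hsup hinf hsdiff hu₁ hu₂,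
      GoodElt.sdiff hsup hinf hsdiff hw₁ hw₂, fun v => ?_⟩
    show lift (_ \ _) = _
    rw [← lift_sdiff_lift, h₁ v, h₂ v, aux_bsdiff]

private lemma pair_normal
    (hbot : ⊥ ∈ C)
    (hsup : ∀ a ∈ C, ∀ b ∈ C, a ⊔ b ∈ C)
    (hinf : ∀ a ∈ C, ∀ b ∈ C, a ⊓ b ∈ C)
    (hsdiff : ∀ a ∈ C, ∀ b ∈ C, a \ b ∈ C)
    {f g : (Fin 1 → A) → A} (hf : IsTermFun C 1 f) (hg : IsTermFun C 1 g) :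
    ∃ s t : Booleanisation A, GoodElt C t ∧
      ∀ v : Fin 1 → A,
        (f v = g v ↔ (lift (v 0) ⊓ s = ⊥ ∧ t ≤ lift (v 0))) := by
  obtain ⟨u, w, _, hw, h1⟩ := termFun_normal hbot hsup hinf hsdiff hf
  obtain ⟨u', w', _, hw', h2⟩ := termFun_normal hbot hsup hinf hsdiff hg
  refine ⟨u \ u' ⊔ u' \ u, w \ w' ⊔ w' \ w,
    GoodElt.sup hsup hinf hsdiff (GoodElt.sdiff hsup hinf hsdiff hw hw')
      (GoodElt.sdiff hsup hinf hsdiff hw' hw), fun v => ?_⟩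
  rw [show (f v = g v) ↔ (lift (f v) = lift (g v)) from
      ⟨congrArg lift, fun h => le_antisymm (lift_le_lift.1 h.le) (lift_le_lift.1 h.ge)⟩,
    h1 v, h2 v, aux_decomp_eq_iff, aux_inf_eq_inf_iff, aux_sdiff_eq_sdiff_iff]

end Normal

theorem ershov_weakNoetherian_lub {A : Type*} [GeneralizedBooleanAlgebra A]
    {C : Set A}
    (hbot : ⊥ ∈ C)
    (hsup : ∀ a ∈ C, ∀ b ∈ C, a ⊔ b ∈ C)
    (hinf : ∀ a ∈ C, ∀ b ∈ C, a ⊓ b ∈ C)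
    (hsdiff : ∀ a ∈ C, ∀ b ∈ C, a \ b ∈ C)
    (hW : WeakEquationallyNoetherian A C) :
    ∀ D ⊆ C, BddAbove D → ∃ d ∈ C, IsLUB D d := by
  classical
  intro D hD hbdd
  obtain ⟨u₀, hu₀⟩ := hbdd
  open Booleanisation in
  set S : Set (((Fin 1 → A) → A) × ((Fin 1 → A) → A)) :=
    (fun c => ((fun v => v 0 ⊔ c), (fun v => v 0))) '' D with hSdef
  have hSterm : ∀ p ∈ S, IsTermFun C 1 p.1 ∧ IsTermFun C 1 p.2 := by
    rintro p ⟨c, hc, rfl⟩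
    exact ⟨IsTermFun.sup (IsTermFun.proj 0) (IsTermFun.const (hD hc)), IsTermFun.proj 0⟩
  obtain ⟨S', hfin, hterm, hsol⟩ := hW 1 S hSterm
  have hSolS : ∀ x : A, (fun _ : Fin 1 => x) ∈ SolSet S ↔ x ∈ upperBounds D := by
    intro x
    constructor
    · intro h c hc
      exact sup_eq_left.1 (h _ ⟨c, hc, rfl⟩)
    · rintro h p ⟨c, hc, rfl⟩
      exact sup_eq_left.2 (h hc)
  have key : ∀ p : ((Fin 1 → A) → A) × ((Fin 1 → A) → A),
      ∃ (s : Booleanisation A) (c : A), p ∈ S' →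
        (c ∈ C ∧ ∀ v : Fin 1 → A,
          (p.1 v = p.2 v ↔ (Booleanisation.lift (v 0) ⊓ s = ⊥ ∧ c ≤ v 0))) := by
    intro p
    by_cases hp : p ∈ S'
    · obtain ⟨s, t, ht, hiff⟩ :=
        pair_normal hbot hsup hinf hsdiff (hterm p hp).1 (hterm p hp).2
      have hu₀' : (fun _ : Fin 1 => u₀) ∈ SolSet S' := by
        rw [hsol]; exact (hSolS u₀).2 hu₀
      have h2 := (hiff _).1 (hu₀' p hp)
      rcases ht with ⟨c, hc, rfl⟩ | ⟨c, hc, rfl⟩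
      · refine ⟨s, c, fun _ => ⟨hc, fun v => ?_⟩⟩
        rw [hiff v, Booleanisation.lift_le_lift]
      · exact absurd h2.2 Booleanisation.not_comp_le_lift
    · exact ⟨⊥, ⊥, fun h => absurd h hp⟩
  choose sfun cfun hkey using key
  set F := hfin.toFinset with hF
  set d := F.sup cfun with hd
  have hu₀' : (fun _ : Fin 1 => u₀) ∈ SolSet S' := by
    rw [hsol]; exact (hSolS u₀).2 hu₀
  have hdC : d ∈ C := by
    refine Finset.sup_induction hbot (fun a ha b hb => hsup a ha b hb) ?_
    intro p hp
    exact (hkey p (hfin.mem_toFinset.1 hp)).1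
  have hle : ∀ x ∈ upperBounds D, d ≤ x := by
    intro x hx
    have hx' : (fun _ : Fin 1 => x) ∈ SolSet S' := by
      rw [hsol]; exact (hSolS x).2 hx
    refine Finset.sup_le fun p hp => ?_
    have hp' := hfin.mem_toFinset.1 hp
    exact (((hkey p hp').2 _).1 (hx' p hp')).2
  have hdu₀ : d ≤ u₀ := hle u₀ hu₀
  have hdub : d ∈ upperBounds D := by
    rw [← hSolS, ← hsol]
    intro p hp'
    have hpF : p ∈ F := hfin.mem_toFinset.2 hp'
    refine ((hkey p hp').2 _).2 ⟨?_, Finset.le_sup hpF⟩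
    have hb := (((hkey p hp').2 _).1 (hu₀' p hp')).1
    have : Booleanisation.lift d ⊓ sfun p ≤ ⊥ := by
      calc Booleanisation.lift d ⊓ sfun p
          ≤ Booleanisation.lift u₀ ⊓ sfun p :=
            inf_le_inf_right _ (Booleanisation.lift_le_lift.2 hdu₀)
        _ = ⊥ := hb
    exact le_bot_iff.1 this
  exact ⟨d, hdC, hdub, fun x hx => hle x hx⟩
end

section
/- A generalized Boolean algebra A is weak equationally Noetherian over its Ershov subalgebra of constants C if and only if both of the following hold: (1) every subset D ⊆ C that has an upper bound in A has a least upper bound in A belonging to C (there exists d ∈ C with IsLUB D d); and (2) for every subset D ⊆ C with no upper bound in A there exists c ∈ C such that {x ∈ A | ∀ d ∈ D, x ⊓ d = ⊥} = {x ∈ A | x ≤ c}. -/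
open Booleanisation

namespace ErshovAux

variable {A : Type*} [GeneralizedBooleanAlgebra A]

lemma lift_finsetSup {ι : Type*} (s : Finset ι) (f : ι → A) :
    lift (s.sup f) = s.sup fun i => lift (f i) := by
  classical
  induction s using Finset.induction_on with
  | empty => simp
  | insert _ _ h ih => rw [Finset.sup_insert, Finset.sup_insert, ← ih, lift_sup_lift]

lemma compl_finsetSup {B : Type*} [BooleanAlgebra B] {ι : Type*} (s : Finset ι) (f : ι → B) :
    (s.sup f)ᶜ = s.inf fun i => (f i)ᶜ := by
  classical
  induction s using Finset.induction_on with
  | empty => simp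
  | insert _ _ h ih => rw [Finset.sup_insert, Finset.inf_insert, compl_sup, ih]

/-- The minterm function. -/
def mfun {n : ℕ} (v : Fin n → A) (σ : Fin n → Bool) : Booleanisation A :=
  Finset.univ.inf fun i => if σ i = true then lift (v i) else comp (v i)

lemma lift_comp_ne (a b : A) : lift a ≠ comp b := by
  simp [lift, comp]
  exact Sum.inl_ne_inr

lemma part_le {n : ℕ} (v : Fin n → A) (s : Finset (Fin n)) (x : Booleanisation A) :
    x ≤ (Finset.univ : Finset (Fin n → Bool)).sup
      (fun σ => x ⊓ s.inf fun i => if σ i = true then lift (v i) else comp (v i)) := by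
  classical
  induction s using Finset.induction_on generalizing x with
  | empty =>
    refine le_trans ?_ (Finset.le_sup (f := fun σ : Fin n → Bool =>
      x ⊓ (∅ : Finset (Fin n)).inf fun i => if σ i = true then lift (v i) else comp (v i))
      (Finset.mem_univ (fun _ => true)))
    simp
  | @insert j s hj ih =>
    have hsplit : x = (x ⊓ lift (v j)) ⊔ (x ⊓ comp (v j)) := by
      rw [← inf_sup_left]
      have : lift (v j) ⊔ comp (v j) = ⊤ := by
        rw [lift_sup_comp, sdiff_self, comp_bot]
      rw [this, inf_top_eq]
    have key : ∀ (b : Bool) (y : Booleanisation A),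
        (y ⊓ (if b then lift (v j) else comp (v j))) ≤ (Finset.univ : Finset (Fin n → Bool)).sup
          (fun σ => y ⊓ (if b then lift (v j) else comp (v j)) ⊓ (insert j s).inf
            fun i => if σ i = true then lift (v i) else comp (v i)) → True := fun _ _ _ => trivial
    clear key
    have step : ∀ b : Bool, (x ⊓ (if b then lift (v j) else comp (v j))) ≤
        (Finset.univ : Finset (Fin n → Bool)).sup
          (fun σ => x ⊓ (insert j s).inf fun i => if σ i = true then lift (v i) else comp (v i)) := by
      intro b
      refine (ih (x ⊓ (if b then lift (v j) else comp (v j)))).trans (Finset.sup_le ?_)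
      intro σ _
      have hupd : (x ⊓ (if b then lift (v j) else comp (v j)) ⊓ s.inf
            fun i => if σ i = true then lift (v i) else comp (v i)) =
          x ⊓ (insert j s).inf
            fun i => if Function.update σ j b i = true then lift (v i) else comp (v i) := by
        rw [Finset.inf_insert]
        have h1 : (if Function.update σ j b j = true then lift (v j) else comp (v j)) =
            (if b then lift (v j) else comp (v j)) := by
          rw [Function.update_self]
        have h2 : (s.inf fun i => if Function.update σ j b i = true then lift (v i) else comp (v i)) =
            s.inf fun i => if σ i = true then lift (v i) else comp (v i) := by
          refine Finset.inf_congr rfl fun i hi => ?_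
          have hij : i ≠ j := fun h => hj (h ▸ hi)
          rw [Function.update_of_ne hij]
        rw [h1, h2, ← inf_assoc]
      rw [hupd]
      exact Finset.le_sup (f := fun σ : Fin n → Bool =>
        x ⊓ (insert j s).inf fun i => if σ i = true then lift (v i) else comp (v i))
        (Finset.mem_univ (Function.update σ j b))
    calc x = (x ⊓ lift (v j)) ⊔ (x ⊓ comp (v j)) := hsplit
    _ ≤ _ := sup_le (step true) (step false)

lemma partition {n : ℕ} (v : Fin n → A) (x : Booleanisation A) :
    x = (Finset.univ : Finset (Fin n → Bool)).sup fun σ => x ⊓ mfun v σ := by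
  refine le_antisymm (part_le v Finset.univ x) (Finset.sup_le fun σ _ => inf_le_left)

lemma mfun_le_of_true {n : ℕ} {v : Fin n → A} {σ : Fin n → Bool} {i : Fin n} (h : σ i = true) :
    mfun v σ ≤ lift (v i) := by
  have := Finset.inf_le (f := fun i => if σ i = true then lift (v i) else comp (v i))
    (Finset.mem_univ i)
  unfold mfun
  simpa [h] using this

lemma mfun_le_of_false {n : ℕ} {v : Fin n → A} {σ : Fin n → Bool} {i : Fin n} (h : σ i = false) :
    mfun v σ ≤ comp (v i) := by
  have := Finset.inf_le (f := fun i => if σ i = true then lift (v i) else comp (v i))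
    (Finset.mem_univ i)
  unfold mfun
  simpa [h] using this

lemma mfun_disjoint {n : ℕ} (v : Fin n → A) {σ τ : Fin n → Bool} (h : σ ≠ τ) :
    mfun v σ ⊓ mfun v τ = ⊥ := by
  have : ∃ i, σ i ≠ τ i := by
    by_contra hc
    push_neg at hc
    exact h (funext hc)
  obtain ⟨i, hi⟩ := this
  have hlc : ∀ a : A, lift a ⊓ comp a = ⊥ := fun a => by
    rw [lift_inf_comp, sdiff_self, lift_bot]
  cases hσ : σ i with
  | true =>
    have hτ : τ i = false := by
      cases hτ : τ i
      · rfl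
      · exact absurd (hσ.trans hτ.symm) hi
    refine le_bot_iff.1 ?_
    calc mfun v σ ⊓ mfun v τ ≤ lift (v i) ⊓ comp (v i) :=
      inf_le_inf (mfun_le_of_true hσ) (mfun_le_of_false hτ)
    _ = ⊥ := hlc _
  | false =>
    have hτ : τ i = true := by
      cases hτ : τ i
      · exact absurd (hσ.trans hτ.symm) hi
      · rfl
    refine le_bot_iff.1 ?_
    calc mfun v σ ⊓ mfun v τ ≤ comp (v i) ⊓ lift (v i) :=
      inf_le_inf (mfun_le_of_false hσ) (mfun_le_of_true hτ)
    _ = ⊥ := by rw [inf_comm]; exact hlc _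

end ErshovAux
section
variable {A : Type*} [GeneralizedBooleanAlgebra A] {C : Set A}
open ErshovAux Booleanisation

namespace ErshovAux

/-- Allowed coefficients. -/
def Cset (C : Set A) : Set (Booleanisation A) :=
  {b | (∃ c ∈ C, b = lift c) ∨ ∃ c ∈ C, b = comp c}

variable (hbot : ⊥ ∈ C)
    (hsup : ∀ a ∈ C, ∀ b ∈ C, a ⊔ b ∈ C)
    (hinf : ∀ a ∈ C, ∀ b ∈ C, a ⊓ b ∈ C)
    (hsdiff : ∀ a ∈ C, ∀ b ∈ C, a \ b ∈ C)

include hbot in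
lemma Cset_bot : (⊥ : Booleanisation A) ∈ Cset C := Or.inl ⟨⊥, hbot, rfl⟩

include hbot in
lemma Cset_top : (⊤ : Booleanisation A) ∈ Cset C := Or.inr ⟨⊥, hbot, rfl⟩

include hsup hinf hsdiff in
lemma Cset_sup {x y : Booleanisation A} (hx : x ∈ Cset C) (hy : y ∈ Cset C) :
    x ⊔ y ∈ Cset C := by
  rcases hx with ⟨c, hc, rfl⟩ | ⟨c, hc, rfl⟩ <;> rcases hy with ⟨d, hd, rfl⟩ | ⟨d, hd, rfl⟩
  · exact Or.inl ⟨c ⊔ d, hsup c hc d hd, (lift_sup_lift c d).symm⟩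
  · exact Or.inr ⟨d \ c, hsdiff d hd c hc, (lift_sup_comp c d).symm⟩
  · exact Or.inr ⟨c \ d, hsdiff c hc d hd, (comp_sup_lift c d).symm⟩
  · exact Or.inr ⟨c ⊓ d, hinf c hc d hd, (comp_sup_comp c d).symm⟩

include hsup hinf hsdiff in
lemma Cset_inf {x y : Booleanisation A} (hx : x ∈ Cset C) (hy : y ∈ Cset C) :
    x ⊓ y ∈ Cset C := by
  rcases hx with ⟨c, hc, rfl⟩ | ⟨c, hc, rfl⟩ <;> rcases hy with ⟨d, hd, rfl⟩ | ⟨d, hd, rfl⟩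
  · exact Or.inl ⟨c ⊓ d, hinf c hc d hd, (lift_inf_lift c d).symm⟩
  · exact Or.inl ⟨c \ d, hsdiff c hc d hd, (lift_inf_comp c d).symm⟩
  · exact Or.inl ⟨d \ c, hsdiff d hd c hc, (comp_inf_lift c d).symm⟩
  · exact Or.inr ⟨c ⊔ d, hsup c hc d hd, (comp_inf_comp c d).symm⟩

include hsup hinf hsdiff in
lemma Cset_sdiff {x y : Booleanisation A} (hx : x ∈ Cset C) (hy : y ∈ Cset C) :
    x \ y ∈ Cset C := by
  rcases hx with ⟨c, hc, rfl⟩ | ⟨c, hc, rfl⟩ <;> rcases hy with ⟨d, hd, rfl⟩ | ⟨d, hd, rfl⟩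
  · exact Or.inl ⟨c \ d, hsdiff c hc d hd, (lift_sdiff_lift c d).symm⟩
  · exact Or.inl ⟨c ⊓ d, hinf c hc d hd, (lift_sdiff_comp c d).symm⟩
  · exact Or.inr ⟨c ⊔ d, hsup c hc d hd, (comp_sdiff_lift c d).symm⟩
  · exact Or.inl ⟨d \ c, hsdiff d hd c hc, (comp_sdiff_comp c d).symm⟩

include hbot hsup hinf hsdiff in
lemma normal_form {n : ℕ} {f : (Fin n → A) → A} (hf : IsTermFun C n f) :
    ∃ γ : (Fin n → Bool) → Booleanisation A, (∀ σ, γ σ ∈ Cset C) ∧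
      ∀ v, lift (f v) = (Finset.univ : Finset (Fin n → Bool)).sup fun σ => mfun v σ ⊓ γ σ := by
  induction hf with
  | proj i =>
    refine ⟨fun σ => if σ i = true then ⊤ else ⊥, fun σ => ?_, fun v => ?_⟩
    · by_cases h : σ i = true
      · simp only [if_pos h]; exact Cset_top hbot
      · simp only [if_neg h]; exact Cset_bot hbot
    · rw [partition v (lift (v i))]
      refine Finset.sup_congr rfl fun σ _ => ?_
      by_cases h : σ i = true
      · simp only [if_pos h, inf_top_eq]
        exact inf_eq_right.2 (mfun_le_of_true h)
      · have h' : σ i = false := by simpa using h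
        simp only [if_neg h, inf_bot_eq]
        refine le_bot_iff.1 ?_
        calc lift (v i) ⊓ mfun v σ ≤ lift (v i) ⊓ comp (v i) :=
          inf_le_inf le_rfl (mfun_le_of_false h')
        _ = ⊥ := by rw [lift_inf_comp, sdiff_self, lift_bot]
  | @const c hc =>
    refine ⟨fun _ => lift c, fun _ => Or.inl ⟨c, hc, rfl⟩, fun v => ?_⟩
    conv_lhs => rw [partition v (lift c)]
    exact Finset.sup_congr rfl fun σ _ => inf_comm _ _
  | @sup f g hf hg ihf ihg =>
    obtain ⟨γ₁, hm₁, he₁⟩ := ihf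
    obtain ⟨γ₂, hm₂, he₂⟩ := ihg
    refine ⟨fun σ => γ₁ σ ⊔ γ₂ σ, fun σ => Cset_sup hsup hinf hsdiff (hm₁ σ) (hm₂ σ),
      fun v => ?_⟩
    rw [← lift_sup_lift, he₁ v, he₂ v, ← Finset.sup_sup]
    exact Finset.sup_congr rfl fun σ _ => (inf_sup_left _ _ _).symm
  | @inf f g hf hg ihf ihg =>
    obtain ⟨γ₁, hm₁, he₁⟩ := ihf
    obtain ⟨γ₂, hm₂, he₂⟩ := ihg
    refine ⟨fun σ => γ₁ σ ⊓ γ₂ σ, fun σ => Cset_inf hsup hinf hsdiff (hm₁ σ) (hm₂ σ),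
      fun v => ?_⟩
    rw [← lift_inf_lift, he₁ v, he₂ v]
    refine le_antisymm ?_ ?_
    · rw [Finset.sup_inf_distrib_right]
      refine Finset.sup_le fun σ _ => ?_
      rw [Finset.sup_inf_distrib_left]
      refine Finset.sup_le fun τ _ => ?_
      by_cases hστ : σ = τ
      · subst hστ
        refine le_trans (le_of_eq ?_) (Finset.le_sup (f := fun σ => mfun v σ ⊓ (γ₁ σ ⊓ γ₂ σ))
          (Finset.mem_univ σ))
        show mfun v σ ⊓ γ₁ σ ⊓ (mfun v σ ⊓ γ₂ σ) = mfun v σ ⊓ (γ₁ σ ⊓ γ₂ σ)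
        rw [inf_inf_inf_comm, inf_idem]
      · refine le_trans ?_ bot_le
        calc mfun v σ ⊓ γ₁ σ ⊓ (mfun v τ ⊓ γ₂ τ) ≤ mfun v σ ⊓ mfun v τ := by
              refine le_inf ?_ ?_
              · exact le_trans inf_le_left inf_le_left
              · exact le_trans inf_le_right inf_le_left
        _ = ⊥ := mfun_disjoint v hστ
        _ ≤ ⊥ := le_rfl
    · refine Finset.sup_le fun σ _ => ?_
      refine le_inf ?_ ?_
      · refine le_trans ?_ (Finset.le_sup (f := fun σ => mfun v σ ⊓ γ₁ σ) (Finset.mem_univ σ))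
        exact inf_le_inf le_rfl inf_le_left
      · refine le_trans ?_ (Finset.le_sup (f := fun σ => mfun v σ ⊓ γ₂ σ) (Finset.mem_univ σ))
        exact inf_le_inf le_rfl inf_le_right
  | @sdiff f g hf hg ihf ihg =>
    obtain ⟨γ₁, hm₁, he₁⟩ := ihf
    obtain ⟨γ₂, hm₂, he₂⟩ := ihg
    refine ⟨fun σ => γ₁ σ \ γ₂ σ, fun σ => Cset_sdiff hsup hinf hsdiff (hm₁ σ) (hm₂ σ),
      fun v => ?_⟩
    rw [← lift_sdiff_lift, he₁ v, he₂ v]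
    rw [sdiff_eq]
    refine le_antisymm ?_ ?_
    · rw [Finset.sup_inf_distrib_right]
      refine Finset.sup_le fun σ _ => ?_
      have h1 : mfun v σ ⊓ γ₁ σ ⊓ ((Finset.univ : Finset (Fin n → Bool)).sup
          fun τ => mfun v τ ⊓ γ₂ τ)ᶜ ≤ mfun v σ ⊓ γ₁ σ ⊓ (mfun v σ ⊓ γ₂ σ)ᶜ := by
        refine inf_le_inf le_rfl (compl_le_compl ?_)
        exact Finset.le_sup (f := fun τ => mfun v τ ⊓ γ₂ τ) (Finset.mem_univ σ)
      refine le_trans h1 ?_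
      have h2 : mfun v σ ⊓ γ₁ σ ⊓ (mfun v σ)ᶜ = ⊥ := by
        rw [inf_right_comm, inf_compl_eq_bot, bot_inf_eq]
      calc mfun v σ ⊓ γ₁ σ ⊓ (mfun v σ ⊓ γ₂ σ)ᶜ
          = mfun v σ ⊓ γ₁ σ ⊓ (mfun v σ)ᶜ ⊔ mfun v σ ⊓ γ₁ σ ⊓ (γ₂ σ)ᶜ := by
            rw [compl_inf, inf_sup_left]
        _ = mfun v σ ⊓ (γ₁ σ \ γ₂ σ) := by
            rw [h2, bot_sup_eq, sdiff_eq, inf_assoc]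
        _ ≤ _ := Finset.le_sup (f := fun σ => mfun v σ ⊓ (γ₁ σ \ γ₂ σ)) (Finset.mem_univ σ)
    · rw [← sdiff_eq]
      refine Finset.sup_le fun σ _ => ?_
      show mfun v σ ⊓ (γ₁ σ \ γ₂ σ) ≤
        ((Finset.univ : Finset (Fin n → Bool)).sup fun σ => mfun v σ ⊓ γ₁ σ) \
          (Finset.univ : Finset (Fin n → Bool)).sup fun τ => mfun v τ ⊓ γ₂ τ
      rw [le_sdiff]
      constructor
      · refine le_trans ?_ (Finset.le_sup (f := fun σ => mfun v σ ⊓ γ₁ σ) (Finset.mem_univ σ))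
        exact inf_le_inf le_rfl sdiff_le
      · rw [Finset.disjoint_sup_right]
        intro τ _
        by_cases hστ : σ = τ
        · subst hστ
          exact Disjoint.mono inf_le_right inf_le_right disjoint_sdiff_self_left
        · exact (disjoint_iff.2 (mfun_disjoint v hστ)).mono inf_le_left inf_le_left
end ErshovAux
end
section
variable {A : Type*} [GeneralizedBooleanAlgebra A] {C : Set A}
open ErshovAux Booleanisation

namespace ErshovAux

lemma lift_inj {a b : A} (h : lift a = lift b) : a = b := Sum.inl_injective h

lemma eq_bot_iff_lift {a : A} : a = ⊥ ↔ lift a = ⊥ :=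
  ⟨fun h => h ▸ lift_bot, fun h => lift_inj (h.trans lift_bot.symm)⟩

lemma comp_finsetSup {ι : Type*} (s : Finset ι) (f : ι → A) :
    comp (s.sup f) = s.inf fun i => comp (f i) := by
  have h := compl_finsetSup (s := s) (f := fun i => lift (f i))
  rw [← lift_finsetSup, compl_lift] at h
  rw [h]
  exact Finset.inf_congr rfl fun i _ => compl_lift (f i)

lemma lift_finsetInf' {ι : Type*} {s : Finset ι} (hs : s.Nonempty) (f : ι → A) :
    lift (s.inf' hs f) = s.inf fun i => lift (f i) := by
  classical
  rw [← Finset.inf'_eq_inf hs fun i => lift (f i)]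
  induction hs using Finset.Nonempty.cons_induction with
  | singleton a => simp
  | cons a s ha hs ih => rw [Finset.inf'_cons (H := hs), Finset.inf'_cons (H := hs), ← ih, lift_inf_lift]

/-- Indices at which `σ` is true/false. -/
def Tset {n : ℕ} (σ : Fin n → Bool) : Finset (Fin n) :=
  Finset.univ.filter fun i => σ i = true

def Fset {n : ℕ} (σ : Fin n → Bool) : Finset (Fin n) :=
  Finset.univ.filter fun i => ¬ σ i = true

lemma mfun_eq_lift {n : ℕ} (v : Fin n → A) (σ : Fin n → Bool) (hT : (Tset σ).Nonempty) :
    mfun v σ = lift ((Tset σ).inf' hT v \ (Fset σ).sup v) := by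
  classical
  have hsplit : (Finset.univ : Finset (Fin n)) = Tset σ ∪ Fset σ :=
    (Finset.filter_union_filter_not_eq _ _).symm
  rw [mfun]
  rw [hsplit, Finset.inf_union]
  have h1 : ((Tset σ).inf fun i => if σ i = true then lift (v i) else comp (v i)) =
      (Tset σ).inf fun i => lift (v i) :=
    Finset.inf_congr rfl fun i hi => if_pos (Finset.mem_filter.1 hi).2
  have h2 : ((Fset σ).inf fun i => if σ i = true then lift (v i) else comp (v i)) =
      (Fset σ).inf fun i => comp (v i) :=
    Finset.inf_congr rfl fun i hi => if_neg (Finset.mem_filter.1 hi).2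
  rw [h1, h2, ← lift_finsetInf' hT, ← comp_finsetSup, lift_inf_comp]

lemma mfun_all_false {n : ℕ} (v : Fin n → A) (σ : Fin n → Bool) (hσ : ∀ i, σ i = false) :
    mfun v σ = comp (Finset.univ.sup v) := by
  rw [mfun, comp_finsetSup]
  exact Finset.inf_congr rfl fun i _ => if_neg (by simp [hσ i])

lemma termfun_finsetSup (hbot : ⊥ ∈ C) {n : ℕ} (s : Finset (Fin n)) :
    IsTermFun C n fun v => s.sup v := by
  classical
  induction s using Finset.induction_on with
  | empty =>
    have : (fun v : Fin n → A => (∅ : Finset (Fin n)).sup v) = fun _ => (⊥ : A) := by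
      funext v; simp
    rw [this]; exact IsTermFun.const hbot
  | @insert a s ha ih =>
    have : (fun v : Fin n → A => (insert a s).sup v) = fun v => v a ⊔ s.sup v := by
      funext v; simp
    rw [this]; exact IsTermFun.sup (IsTermFun.proj a) ih

lemma termfun_finsetInf' {n : ℕ} {s : Finset (Fin n)} (hs : s.Nonempty) :
    IsTermFun C n fun v => s.inf' hs v := by
  classical
  induction hs using Finset.Nonempty.cons_induction with
  | singleton a =>
    have : (fun v : Fin n → A => ({a} : Finset (Fin n)).inf' (Finset.singleton_nonempty a) v) =
        fun v => v a := by funext v; simp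
    rw [this]; exact IsTermFun.proj a
  | cons a s ha hs ih =>
    have : (fun v : Fin n → A => (Finset.cons a s ha).inf' (Finset.cons_nonempty ha) v) =
        fun v => v a ⊓ s.inf' hs v := by funext v; rw [Finset.inf'_cons (H := hs)]
    rw [this]; exact IsTermFun.inf (IsTermFun.proj a) ih

/-- the A-valued minterm for `σ` with a positive index -/
def aterm {n : ℕ} (σ : Fin n → Bool) (hT : (Tset σ).Nonempty) (v : Fin n → A) : A :=
  (Tset σ).inf' hT v \ (Fset σ).sup v

lemma termfun_aterm (hbot : ⊥ ∈ C) {n : ℕ} (σ : Fin n → Bool) (hT : (Tset σ).Nonempty) :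
    IsTermFun C n (aterm σ hT) :=
  IsTermFun.sdiff (termfun_finsetInf' hT) (termfun_finsetSup hbot _)

lemma eq_iff_sdiff_bot {a b : A} : a = b ↔ (a \ b) ⊔ (b \ a) = ⊥ := by
  rw [sup_eq_bot_iff, sdiff_eq_bot_iff, sdiff_eq_bot_iff, le_antisymm_iff]

lemma lub_disj {D : Set A} {c : A} (hc : IsLUB D c) (x : A) :
    (∀ d ∈ D, x ⊓ d = ⊥) ↔ x ⊓ c = ⊥ := by
  constructor
  · intro h
    have hub : ∀ d ∈ D, d ≤ c \ x := by
      intro d hd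
      rw [le_sdiff]
      refine ⟨hc.1 hd, disjoint_iff.2 (by rw [inf_comm]; exact h d hd)⟩
    have hcc : c ≤ c \ x := hc.2 hub
    refine le_bot_iff.1 ?_
    calc x ⊓ c ≤ x ⊓ (c \ x) := inf_le_inf le_rfl hcc
    _ = ⊥ := inf_sdiff_self_right
  · intro h d hd
    refine le_bot_iff.1 ?_
    calc x ⊓ d ≤ x ⊓ c := inf_le_inf le_rfl (hc.1 hd)
    _ = ⊥ := h

lemma lub_ub {D : Set A} {c : A} (hc : IsLUB D c) (b : A) :
    (∀ d ∈ D, d ≤ b) ↔ c ≤ b :=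
  ⟨fun h => hc.2 h, fun h d hd => (hc.1 hd).trans h⟩

lemma le_all_iff {E : Set A} {e₀ : A} (he₀ : e₀ ∈ E) {c : A}
    (hc : IsLUB ((fun e => e₀ \ e) '' E) c) (x : A) :
    (∀ e ∈ E, x ≤ e) ↔ (x ≤ e₀ ∧ x ⊓ c = ⊥) := by
  constructor
  · intro h
    refine ⟨h e₀ he₀, (lub_disj hc x).1 ?_⟩
    rintro d ⟨e, he, rfl⟩
    refine le_bot_iff.1 ?_
    calc x ⊓ (e₀ \ e) ≤ e ⊓ (e₀ \ e) := inf_le_inf (h e he) le_rfl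
    _ = ⊥ := inf_sdiff_self_right
  · rintro ⟨hx0, hxc⟩ e he
    have hd : x ⊓ (e₀ \ e) = ⊥ := (lub_disj hc x).2 hxc _ ⟨e, he, rfl⟩
    calc x = x ⊓ e₀ := (inf_eq_left.2 hx0).symm
    _ = x ⊓ (e₀ ⊓ e ⊔ e₀ \ e) := by rw [sup_inf_sdiff]
    _ = x ⊓ (e₀ ⊓ e) ⊔ x ⊓ (e₀ \ e) := inf_sup_left _ _ _
    _ = x ⊓ (e₀ ⊓ e) := by rw [hd, sup_bot_eq]
    _ ≤ e := le_trans inf_le_right inf_le_right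

end ErshovAux
end
section
variable {A : Type*} [GeneralizedBooleanAlgebra A] {C : Set A}
open ErshovAux Booleanisation

namespace ErshovAux

lemma wen_of_conditions
    (hbot : ⊥ ∈ C)
    (hsup : ∀ a ∈ C, ∀ b ∈ C, a ⊔ b ∈ C)
    (hinf : ∀ a ∈ C, ∀ b ∈ C, a ⊓ b ∈ C)
    (hsdiff : ∀ a ∈ C, ∀ b ∈ C, a \ b ∈ C)
    (hL : ∀ D ⊆ C, BddAbove D → ∃ d ∈ C, IsLUB D d)
    (hU : ∀ D ⊆ C, ¬ BddAbove D →
      ∃ c ∈ C, {x : A | ∀ d ∈ D, x ⊓ d = ⊥} = {x : A | x ≤ c}) :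
    WeakEquationallyNoetherian A C := by
  classical
  intro n S hS
  have hterm : ∀ p ∈ S, ∃ γ : (Fin n → Bool) → Booleanisation A,
      (∀ σ, γ σ ∈ Cset C) ∧ ∀ v, lift ((p.1 v \ p.2 v) ⊔ (p.2 v \ p.1 v)) =
        (Finset.univ : Finset (Fin n → Bool)).sup fun σ => mfun v σ ⊓ γ σ := by
    intro p hp
    exact normal_form hbot hsup hinf hsdiff
      (IsTermFun.sup (IsTermFun.sdiff (hS p hp).1 (hS p hp).2)
        (IsTermFun.sdiff (hS p hp).2 (hS p hp).1))
  choose! γ hγmem hγeq using hterm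
  have heqiff : ∀ p ∈ S, ∀ v : Fin n → A,
      (p.1 v = p.2 v ↔ ∀ σ, mfun v σ ⊓ γ p σ = ⊥) := by
    intro p hp v
    rw [eq_iff_sdiff_bot, eq_bot_iff_lift, hγeq p hp v, Finset.sup_eq_bot_iff]
    exact ⟨fun h σ => h σ (Finset.mem_univ σ), fun h σ _ => h σ⟩
  have hsol : ∀ v, v ∈ SolSet S ↔ ∀ σ : Fin n → Bool, ∀ p ∈ S, mfun v σ ⊓ γ p σ = ⊥ := by
    intro v
    constructor
    · intro hv σ p hp
      exact (heqiff p hp v).1 (hv p hp) σ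
    · intro h p hp
      exact (heqiff p hp v).2 fun σ => h σ p hp
  set Dset : (Fin n → Bool) → Set A := fun σ => {c | c ∈ C ∧ ∃ p ∈ S, γ p σ = lift c} with hD
  set Eset : (Fin n → Bool) → Set A := fun σ => {c | c ∈ C ∧ ∃ p ∈ S, γ p σ = comp c} with hE
  have hDsub : ∀ σ, Dset σ ⊆ C := fun σ c hc => hc.1
  have hEsub : ∀ σ, Eset σ ⊆ C := fun σ c hc => hc.1
  have hcond : ∀ (σ : Fin n → Bool) (v : Fin n → A),
      (∀ p ∈ S, mfun v σ ⊓ γ p σ = ⊥) ↔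
        ((∀ c ∈ Dset σ, mfun v σ ⊓ lift c = ⊥) ∧ ∀ c ∈ Eset σ, mfun v σ ⊓ comp c = ⊥) := by
    intro σ v
    constructor
    · intro h
      constructor
      · rintro c ⟨hcC, p, hp, hpγ⟩
        rw [← hpγ]; exact h p hp
      · rintro c ⟨hcC, p, hp, hpγ⟩
        rw [← hpγ]; exact h p hp
    · rintro ⟨h1, h2⟩ p hp
      rcases hγmem p hp σ with ⟨c, hcC, hcγ⟩ | ⟨c, hcC, hcγ⟩
      · rw [hcγ]; exact h1 c ⟨hcC, p, hp, hcγ⟩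
      · rw [hcγ]; exact h2 c ⟨hcC, p, hp, hcγ⟩
  by_cases hEff : ∃ p ∈ S, ∃ c : A, γ p (fun _ => false) = comp c
  · obtain ⟨p, hp, c, hc⟩ := hEff
    have hnone : ∀ v : Fin n → A, p.1 v ≠ p.2 v := by
      intro v h
      have h2 := (heqiff p hp v).1 h (fun _ => false)
      rw [hc, mfun_all_false v _ (fun _ => rfl), comp_inf_comp] at h2
      exact lift_comp_ne ⊥ (Finset.univ.sup v ⊔ c) ((lift_bot.symm.trans h2.symm))
    refine ⟨{p}, Set.finite_singleton p, ?_, ?_⟩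
    · intro q hq
      rw [Set.mem_singleton_iff] at hq
      exact hq ▸ hS p hp
    · ext v
      constructor
      · intro h
        exact absurd (h p rfl) (hnone v)
      · intro h
        exact absurd (h p hp) (hnone v)
  · push_neg at hEff
    have hEffEmpty : Eset (fun _ => false) = ∅ := by
      ext c
      simp only [hE, Set.mem_setOf_eq, Set.mem_empty_iff_false, iff_false]
      rintro ⟨hcC, p, hp, hpγ⟩
      exact hEff p hp c hpγ
    by_cases hB : BddAbove (Dset fun _ => false)
    · obtain ⟨s₀, hs₀C, hs₀lub⟩ := hL _ (hDsub _) hB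
      -- per-σ systems
      have main : ∀ σ : Fin n → Bool, ∃ Sσ : Set (((Fin n → A) → A) × ((Fin n → A) → A)),
          Sσ.Finite ∧ (∀ p ∈ Sσ, IsTermFun C n p.1 ∧ IsTermFun C n p.2) ∧
          ∀ v : Fin n → A, ((∀ p ∈ Sσ, p.1 v = p.2 v) ↔ ∀ p ∈ S, mfun v σ ⊓ γ p σ = ⊥) := by
        intro σ
        by_cases hT : (Tset σ).Nonempty
        · -- positive minterm case
          have hmv : ∀ v : Fin n → A, mfun v σ = lift (aterm σ hT v) := fun v => mfun_eq_lift v σ hT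
          have htrans : ∀ v : Fin n → A, (∀ p ∈ S, mfun v σ ⊓ γ p σ = ⊥) ↔
              ((∀ c ∈ Dset σ, aterm σ hT v ⊓ c = ⊥) ∧ ∀ c ∈ Eset σ, aterm σ hT v ≤ c) := by
            intro v
            rw [hcond σ v]
            constructor
            · rintro ⟨h1, h2⟩
              constructor
              · intro c hc
                have := h1 c hc
                rw [hmv, lift_inf_lift, ← eq_bot_iff_lift] at this
                exact this
              · intro c hc
                have := h2 c hc
                rw [hmv, lift_inf_comp, ← eq_bot_iff_lift, sdiff_eq_bot_iff] at this
                exact this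
            · rintro ⟨h1, h2⟩
              constructor
              · intro c hc
                rw [hmv, lift_inf_lift, ← eq_bot_iff_lift]
                exact h1 c hc
              · intro c hc
                rw [hmv, lift_inf_comp, ← eq_bot_iff_lift, sdiff_eq_bot_iff]
                exact h2 c hc
          -- D-part: a single equation
          have hDpart : ∃ q : ((Fin n → A) → A) × ((Fin n → A) → A),
              (IsTermFun C n q.1 ∧ IsTermFun C n q.2) ∧
              ∀ v : Fin n → A, (q.1 v = q.2 v ↔ ∀ c ∈ Dset σ, aterm σ hT v ⊓ c = ⊥) := by
            by_cases hBσ : BddAbove (Dset σ)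
            · obtain ⟨c, hcC, hlub⟩ := hL _ (hDsub σ) hBσ
              refine ⟨(fun v => aterm σ hT v ⊓ c, fun _ => ⊥),
                ⟨IsTermFun.inf (termfun_aterm hbot σ hT) (IsTermFun.const hcC),
                  IsTermFun.const hbot⟩, fun v => ?_⟩
              exact ⟨fun h d hd => (lub_disj hlub _).2 h d hd, fun h => (lub_disj hlub _).1 h⟩
            · obtain ⟨c, hcC, hset⟩ := hU _ (hDsub σ) hBσ
              refine ⟨(fun v => aterm σ hT v \ c, fun _ => ⊥),
                ⟨IsTermFun.sdiff (termfun_aterm hbot σ hT) (IsTermFun.const hcC),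
                  IsTermFun.const hbot⟩, fun v => ?_⟩
              have := Set.ext_iff.1 hset (aterm σ hT v)
              simp only [Set.mem_setOf_eq] at this
              rw [sdiff_eq_bot_iff]
              exact ⟨fun h => this.2 h, fun h => this.1 h⟩
          obtain ⟨qD, hqDterm, hqDiff⟩ := hDpart
          -- E-part
          have hEpart : ∃ SE : Set (((Fin n → A) → A) × ((Fin n → A) → A)),
              SE.Finite ∧ (∀ p ∈ SE, IsTermFun C n p.1 ∧ IsTermFun C n p.2) ∧
              ∀ v : Fin n → A, ((∀ p ∈ SE, p.1 v = p.2 v) ↔ ∀ c ∈ Eset σ, aterm σ hT v ≤ c) := by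
            by_cases hNE : (Eset σ).Nonempty
            · obtain ⟨e₀, he₀⟩ := hNE
              have himg : (fun e => e₀ \ e) '' Eset σ ⊆ C := by
                rintro x ⟨e, he, rfl⟩
                exact hsdiff e₀ (hEsub σ he₀) e (hEsub σ he)
              have hbdd : BddAbove ((fun e => e₀ \ e) '' Eset σ) := by
                refine ⟨e₀, ?_⟩
                rintro x ⟨e, he, rfl⟩
                exact sdiff_le
              obtain ⟨c'', hc''C, hc''lub⟩ := hL _ himg hbdd
              refine ⟨{(fun v => aterm σ hT v \ e₀, fun _ => ⊥),
                (fun v => aterm σ hT v ⊓ c'', fun _ => ⊥)}, ?_, ?_, ?_⟩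
              · exact (Set.finite_singleton _).insert _
              · rintro p hp
                rcases hp with rfl | hp
                · exact ⟨IsTermFun.sdiff (termfun_aterm hbot σ hT)
                    (IsTermFun.const (hEsub σ he₀)), IsTermFun.const hbot⟩
                · rw [Set.mem_singleton_iff] at hp
                  subst hp
                  exact ⟨IsTermFun.inf (termfun_aterm hbot σ hT) (IsTermFun.const hc''C),
                    IsTermFun.const hbot⟩
              · intro v
                rw [le_all_iff he₀ hc''lub]
                constructor
                · intro h
                  refine ⟨?_, ?_⟩
                  · have := h _ (Set.mem_insert _ _)
                    rwa [sdiff_eq_bot_iff] at this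
                  · exact h _ (Set.mem_insert_of_mem _ rfl)
                · rintro ⟨h1, h2⟩ p hp
                  rcases hp with rfl | hp
                  · rwa [sdiff_eq_bot_iff]
                  · rw [Set.mem_singleton_iff] at hp
                    subst hp
                    exact h2
            · refine ⟨∅, Set.finite_empty, fun p hp => absurd hp (Set.notMem_empty p), fun v => ?_⟩
              constructor
              · intro _ c hc
                exact absurd ⟨c, hc⟩ hNE
              · intro _ p hp
                exact absurd hp (Set.notMem_empty p)
          obtain ⟨SE, hSEfin, hSEterm, hSEiff⟩ := hEpart
          refine ⟨insert qD SE, hSEfin.insert qD, ?_, ?_⟩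
          · rintro p hp
            rcases hp with rfl | hp
            · exact hqDterm
            · exact hSEterm p hp
          · intro v
            rw [htrans v]
            constructor
            · intro h
              exact ⟨(hqDiff v).1 (h qD (Set.mem_insert _ _)),
                (hSEiff v).1 fun p hp => h p (Set.mem_insert_of_mem _ hp)⟩
            · rintro ⟨h1, h2⟩ p hp
              rcases hp with rfl | hp
              · exact (hqDiff v).2 h1
              · exact ((hSEiff v).2 h2) p hp
        · -- all-false case
          have hσ : σ = fun _ => false := by
            funext i
            rw [Finset.not_nonempty_iff_eq_empty] at hT
            have : i ∉ Tset σ := by rw [hT]; exact Finset.notMem_empty i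
            simp only [Tset, Finset.mem_filter, Finset.mem_univ, true_and] at this
            cases h : σ i
            · rfl
            · exact absurd h this
          subst hσ
          refine ⟨{(fun v => s₀ \ Finset.univ.sup v, fun _ => ⊥)}, Set.finite_singleton _, ?_, ?_⟩
          · rintro p hp
            rw [Set.mem_singleton_iff] at hp
            subst hp
            exact ⟨IsTermFun.sdiff (IsTermFun.const hs₀C) (termfun_finsetSup hbot _),
              IsTermFun.const hbot⟩
          · intro v
            rw [hcond _ v]
            have hmv : mfun v (fun _ => false) = comp (Finset.univ.sup v) :=
              mfun_all_false v _ (fun _ => rfl)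
            constructor
            · intro h
              have h1 := h _ (Set.mem_singleton _)
              simp only at h1
              rw [sdiff_eq_bot_iff] at h1
              constructor
              · intro c hc
                rw [hmv, comp_inf_lift, ← eq_bot_iff_lift, sdiff_eq_bot_iff]
                exact le_trans (hs₀lub.1 hc) h1
              · intro c hc
                rw [hEffEmpty] at hc
                exact absurd hc (Set.notMem_empty c)
            · rintro ⟨h1, _⟩ p hp
              rw [Set.mem_singleton_iff] at hp
              subst hp
              simp only
              rw [sdiff_eq_bot_iff]
              refine hs₀lub.2 ?_
              intro c hc
              have := h1 c hc
              rw [hmv, comp_inf_lift, ← eq_bot_iff_lift, sdiff_eq_bot_iff] at this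
              exact this
      choose Sσ hfin hterms hiff using main
      refine ⟨⋃ σ, Sσ σ, Set.finite_iUnion hfin, ?_, ?_⟩
      · intro p hp
        rw [Set.mem_iUnion] at hp
        obtain ⟨σ, hσ⟩ := hp
        exact hterms σ p hσ
      · ext v
        constructor
        · intro h
          rw [hsol v]
          intro σ
          refine (hiff σ v).1 ?_
          intro p hp
          exact h p (Set.mem_iUnion.2 ⟨σ, hp⟩)
        · intro h p hp
          rw [hsol v] at h
          rw [Set.mem_iUnion] at hp
          obtain ⟨σ, hσ⟩ := hp
          exact (hiff σ v).2 (h σ) p hσ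
    · -- unbounded Dset at all-false: SolSet S is empty
      have hempty : ∀ v : Fin n → A, v ∉ SolSet S := by
        intro v hv
        refine hB ⟨Finset.univ.sup v, ?_⟩
        rintro c ⟨hcC, p, hp, hpγ⟩
        have := (hsol v).1 hv (fun _ => false) p hp
        rw [hpγ, mfun_all_false v _ (fun _ => rfl), comp_inf_lift, ← eq_bot_iff_lift,
          sdiff_eq_bot_iff] at this
        exact this
      have hd : ∃ d ∈ Dset (fun _ => false), d ≠ ⊥ := by
        by_contra hc
        push_neg at hc
        refine hB ⟨⊥, ?_⟩
        intro c hcD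
        rw [hc c hcD]
      obtain ⟨d, hdD, hdne⟩ := hd
      refine ⟨{(fun _ => d, fun _ => ⊥)}, Set.finite_singleton _, ?_, ?_⟩
      · rintro p hp
        rw [Set.mem_singleton_iff] at hp
        subst hp
        exact ⟨IsTermFun.const (hDsub _ hdD), IsTermFun.const hbot⟩
      · ext v
        constructor
        · intro h
          exact absurd (h _ (Set.mem_singleton _)) hdne
        · intro h
          exact absurd h (hempty v)

end ErshovAux
end
section
variable {A : Type*} [GeneralizedBooleanAlgebra A] {C : Set A}
open ErshovAux Booleanisation

namespace ErshovAux

lemma mfun_fin1_true (v : Fin 1 → A) : mfun v (fun _ => true) = lift (v 0) := by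
  rw [mfun, Finset.univ_unique, Finset.inf_singleton]
  simp

lemma mfun_fin1_false (v : Fin 1 → A) : mfun v (fun _ => false) = comp (v 0) := by
  rw [mfun, Finset.univ_unique, Finset.inf_singleton]
  simp

lemma sup_bool1 {β : Type*} [SemilatticeSup β] [OrderBot β] (F : (Fin 1 → Bool) → β) :
    (Finset.univ : Finset (Fin 1 → Bool)).sup F = F (fun _ => true) ⊔ F (fun _ => false) := by
  have huniv : (Finset.univ : Finset (Fin 1 → Bool)) =
      {(fun _ => true), (fun _ => false)} := by
    ext σ
    simp only [Finset.mem_univ, true_iff, Finset.mem_insert, Finset.mem_singleton]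
    cases h : σ 0
    · right; funext i; rw [Subsingleton.elim i 0, h]
    · left; funext i; rw [Subsingleton.elim i 0, h]
  rw [huniv, Finset.sup_insert, Finset.sup_singleton]

lemma none_cond {A : Type*} {P : A → Prop} : ∀ q : A, (none : Option A) = some q → P q :=
  fun _ hq => nomatch hq

lemma some_cond {A : Type*} {c : A} {P : A → Prop} (h : P c) :
    ∀ q : A, (some c : Option A) = some q → P q := by
  intro q hq
  obtain rfl := Option.some.inj hq
  exact h

lemma single_shape
    (hbot : ⊥ ∈ C)
    (hsup : ∀ a ∈ C, ∀ b ∈ C, a ⊔ b ∈ C)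
    (hinf : ∀ a ∈ C, ∀ b ∈ C, a ⊓ b ∈ C)
    (hsdiff : ∀ a ∈ C, ∀ b ∈ C, a \ b ∈ C)
    {f g : (Fin 1 → A) → A} (hf : IsTermFun C 1 f) (hg : IsTermFun C 1 g) :
    ∃ p ∈ C, ∃ r ∈ C, ∃ Qo : Option A, (∀ q, Qo = some q → q ∈ C) ∧
      ∀ v : Fin 1 → A, (f v = g v ↔
        (v 0 ⊓ p = ⊥ ∧ r ≤ v 0 ∧ ∀ q, Qo = some q → v 0 ≤ q)) := by
  obtain ⟨γ, hmem, heq⟩ := normal_form hbot hsup hinf hsdiff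
    (IsTermFun.sup (IsTermFun.sdiff hf hg) (IsTermFun.sdiff hg hf))
  have hkey : ∀ v : Fin 1 → A,
      lift ((f v \ g v) ⊔ (g v \ f v)) =
        (lift (v 0) ⊓ γ (fun _ => true)) ⊔ (comp (v 0) ⊓ γ (fun _ => false)) := by
    intro v
    rw [heq v, sup_bool1]
    rw [mfun_fin1_true, mfun_fin1_false]
  -- γ at the all-false pattern is a lift
  have hr : ∃ r ∈ C, γ (fun _ => false) = lift r := by
    rcases hmem (fun _ => false) with ⟨c, hcC, hcγ⟩ | ⟨c, hcC, hcγ⟩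
    · exact ⟨c, hcC, hcγ⟩
    · exfalso
      have h0 := hkey (fun _ => ⊥)
      rw [hcγ, lift_bot, bot_inf_eq, bot_sup_eq, comp_bot, top_inf_eq] at h0
      exact lift_comp_ne _ c h0
  obtain ⟨r, hrC, hrγ⟩ := hr
  have hmain : ∀ v : Fin 1 → A, (f v = g v ↔
      (lift (v 0) ⊓ γ (fun _ => true) = ⊥ ∧ r ≤ v 0)) := by
    intro v
    rw [eq_iff_sdiff_bot, eq_bot_iff_lift, hkey v, sup_eq_bot_iff]
    rw [hrγ, comp_inf_lift, ← eq_bot_iff_lift (a := r \ v 0), sdiff_eq_bot_iff]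
  rcases hmem (fun _ => true) with ⟨c, hcC, hcγ⟩ | ⟨c, hcC, hcγ⟩
  · refine ⟨c, hcC, r, hrC, none, none_cond, fun v => ?_⟩
    rw [hmain v, hcγ, lift_inf_lift, ← eq_bot_iff_lift]
    constructor
    · rintro ⟨h1, h2⟩
      exact ⟨h1, h2, none_cond⟩
    · rintro ⟨h1, h2, _⟩
      exact ⟨h1, h2⟩
  · refine ⟨⊥, hbot, r, hrC, some c, some_cond hcC, fun v => ?_⟩
    rw [hmain v, hcγ, lift_inf_comp, ← eq_bot_iff_lift, sdiff_eq_bot_iff]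
    constructor
    · rintro ⟨h1, h2⟩
      exact ⟨inf_bot_eq _, h2, some_cond h1⟩
    · rintro ⟨_, h2, h3⟩
      exact ⟨h3 c rfl, h2⟩

lemma finite_shape
    (hbot : ⊥ ∈ C)
    (hsup : ∀ a ∈ C, ∀ b ∈ C, a ⊔ b ∈ C)
    (hinf : ∀ a ∈ C, ∀ b ∈ C, a ⊓ b ∈ C)
    (hsdiff : ∀ a ∈ C, ∀ b ∈ C, a \ b ∈ C)
    {S : Set (((Fin 1 → A) → A) × ((Fin 1 → A) → A))} (hfin : S.Finite) :
    (∀ p ∈ S, IsTermFun C 1 p.1 ∧ IsTermFun C 1 p.2) →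
    ∃ p ∈ C, ∃ r ∈ C, ∃ Qo : Option A, (∀ q, Qo = some q → q ∈ C) ∧
      ∀ v : Fin 1 → A, (v ∈ SolSet S ↔
        (v 0 ⊓ p = ⊥ ∧ r ≤ v 0 ∧ ∀ q, Qo = some q → v 0 ≤ q)) := by
  refine Set.Finite.induction_on S hfin ?_ ?_
  · intro _
    refine ⟨⊥, hbot, ⊥, hbot, none, none_cond, fun v => ?_⟩
    constructor
    · intro _
      exact ⟨inf_bot_eq _, bot_le, none_cond⟩
    · intro _ p hp
      exact absurd hp (Set.notMem_empty p)
  · rintro a s ha hsfin ih hterms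
    obtain ⟨p₂, hp₂C, r₂, hr₂C, Q₂, hQ₂C, hiff₂⟩ :=
      ih fun q hq => hterms q (Set.mem_insert_of_mem _ hq)
    obtain ⟨p₁, hp₁C, r₁, hr₁C, Q₁, hQ₁C, hiff₁⟩ :=
      single_shape hbot hsup hinf hsdiff (hterms a (Set.mem_insert _ _)).1
        (hterms a (Set.mem_insert _ _)).2
    have hmem : ∀ v : Fin 1 → A, (v ∈ SolSet (insert a s) ↔ (a.1 v = a.2 v ∧ v ∈ SolSet s)) := by
      intro v
      constructor
      · intro h
        exact ⟨h a (Set.mem_insert _ _), fun q hq => h q (Set.mem_insert_of_mem _ hq)⟩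
      · rintro ⟨h1, h2⟩ q hq
        rcases hq with rfl | hq
        · exact h1
        · exact h2 q hq
    have hsupiff : ∀ x : A, (x ⊓ p₁ = ⊥ ∧ x ⊓ p₂ = ⊥) ↔ x ⊓ (p₁ ⊔ p₂) = ⊥ := by
      intro x
      rw [inf_sup_left, sup_eq_bot_iff]
    -- merge the optional upper constraints
    rcases Q₁ with _ | q₁ <;> rcases Q₂ with _ | q₂
    · refine ⟨p₁ ⊔ p₂, hsup _ hp₁C _ hp₂C, r₁ ⊔ r₂, hsup _ hr₁C _ hr₂C, none,
        none_cond, fun v => ?_⟩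
      rw [hmem v, hiff₁ v, hiff₂ v]
      constructor
      · rintro ⟨⟨h1, h2, _⟩, ⟨h3, h4, _⟩⟩
        exact ⟨(hsupiff _).1 ⟨h1, h3⟩, sup_le h2 h4, none_cond⟩
      · rintro ⟨h1, h2, _⟩
        obtain ⟨ha1, ha2⟩ := (hsupiff _).2 h1
        exact ⟨⟨ha1, le_trans le_sup_left h2, none_cond⟩,
          ⟨ha2, le_trans le_sup_right h2, none_cond⟩⟩
    · refine ⟨p₁ ⊔ p₂, hsup _ hp₁C _ hp₂C, r₁ ⊔ r₂, hsup _ hr₁C _ hr₂C, some q₂,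
        some_cond (hQ₂C q₂ rfl), fun v => ?_⟩
      rw [hmem v, hiff₁ v, hiff₂ v]
      constructor
      · rintro ⟨⟨h1, h2, _⟩, ⟨h3, h4, h5⟩⟩
        exact ⟨(hsupiff _).1 ⟨h1, h3⟩, sup_le h2 h4, some_cond (h5 q₂ rfl)⟩
      · rintro ⟨h1, h2, h3⟩
        obtain ⟨ha1, ha2⟩ := (hsupiff _).2 h1
        exact ⟨⟨ha1, le_trans le_sup_left h2, none_cond⟩,
          ⟨ha2, le_trans le_sup_right h2, some_cond (h3 q₂ rfl)⟩⟩
    · refine ⟨p₁ ⊔ p₂, hsup _ hp₁C _ hp₂C, r₁ ⊔ r₂, hsup _ hr₁C _ hr₂C, some q₁,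
        some_cond (hQ₁C q₁ rfl), fun v => ?_⟩
      rw [hmem v, hiff₁ v, hiff₂ v]
      constructor
      · rintro ⟨⟨h1, h2, h5⟩, ⟨h3, h4, _⟩⟩
        exact ⟨(hsupiff _).1 ⟨h1, h3⟩, sup_le h2 h4, some_cond (h5 q₁ rfl)⟩
      · rintro ⟨h1, h2, h3⟩
        obtain ⟨ha1, ha2⟩ := (hsupiff _).2 h1
        exact ⟨⟨ha1, le_trans le_sup_left h2, some_cond (h3 q₁ rfl)⟩,
          ⟨ha2, le_trans le_sup_right h2, none_cond⟩⟩
    · refine ⟨p₁ ⊔ p₂, hsup _ hp₁C _ hp₂C, r₁ ⊔ r₂, hsup _ hr₁C _ hr₂C, some (q₁ ⊓ q₂),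
        some_cond (hinf _ (hQ₁C q₁ rfl) _ (hQ₂C q₂ rfl)), fun v => ?_⟩
      rw [hmem v, hiff₁ v, hiff₂ v]
      constructor
      · rintro ⟨⟨h1, h2, h5⟩, ⟨h3, h4, h6⟩⟩
        refine ⟨(hsupiff _).1 ⟨h1, h3⟩, sup_le h2 h4, some_cond (le_inf (h5 q₁ rfl) (h6 q₂ rfl))⟩
      · rintro ⟨h1, h2, h3⟩
        obtain ⟨ha1, ha2⟩ := (hsupiff _).2 h1
        have h4 := h3 (q₁ ⊓ q₂) rfl
        exact ⟨⟨ha1, le_trans le_sup_left h2, some_cond (le_trans h4 inf_le_left)⟩,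
          ⟨ha2, le_trans le_sup_right h2, some_cond (le_trans h4 inf_le_right)⟩⟩

end ErshovAux
end
open ErshovAux Booleanisation
theorem ershov_weakNoetherian_iff {A : Type*} [GeneralizedBooleanAlgebra A]
    {C : Set A}
    (hbot : ⊥ ∈ C)
    (hsup : ∀ a ∈ C, ∀ b ∈ C, a ⊔ b ∈ C)
    (hinf : ∀ a ∈ C, ∀ b ∈ C, a ⊓ b ∈ C)
    (hsdiff : ∀ a ∈ C, ∀ b ∈ C, a \ b ∈ C) :
    WeakEquationallyNoetherian A C ↔
      ((∀ D ⊆ C, BddAbove D → ∃ d ∈ C, IsLUB D d) ∧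
       (∀ D ⊆ C, ¬ BddAbove D →
         ∃ c ∈ C, {x : A | ∀ d ∈ D, x ⊓ d = ⊥} = {x : A | x ≤ c})) := by
  constructor
  · intro W
    constructor
    · -- bounded sets have C-suprema
      intro D hDsub hBdd
      obtain ⟨u, hu⟩ := hBdd
      set S : Set (((Fin 1 → A) → A) × ((Fin 1 → A) → A)) :=
        (fun d => ((fun v : Fin 1 → A => v 0 ⊔ d), (fun v : Fin 1 → A => v 0))) '' D with hSdef
      have hterms : ∀ p ∈ S, IsTermFun C 1 p.1 ∧ IsTermFun C 1 p.2 := by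
        rintro p ⟨d, hd, rfl⟩
        exact ⟨IsTermFun.sup (IsTermFun.proj 0) (IsTermFun.const (hDsub hd)), IsTermFun.proj 0⟩
      obtain ⟨S', hfin, hterms', hsols⟩ := W 1 S hterms
      have hchar : ∀ v : Fin 1 → A, (v ∈ SolSet S ↔ ∀ d ∈ D, d ≤ v 0) := by
        intro v
        constructor
        · intro h d hd
          exact sup_eq_left.1 (h _ ⟨d, hd, rfl⟩)
        · rintro h p ⟨d, hd, rfl⟩
          exact sup_eq_left.2 (h d hd)
      obtain ⟨p, hpC, r, hrC, Qo, hQC, hiff⟩ := finite_shape hbot hsup hinf hsdiff hfin hterms'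
      have hub : ∀ x : A, (∀ d ∈ D, d ≤ x) ↔
          (x ⊓ p = ⊥ ∧ r ≤ x ∧ ∀ q, Qo = some q → x ≤ q) := by
        intro x
        have h1 := hiff (fun _ => x)
        rw [hsols] at h1
        exact (hchar (fun _ => x)).symm.trans h1
      have hq : ∀ q, Qo = some q → ∀ a : A, a ≤ q := by
        intro q hq a
        have h1 := ((hub (u ⊔ a)).1 fun d hd => le_trans (hu hd) le_sup_left).2.2 q hq
        exact le_trans le_sup_right h1
      have hp0 : p = ⊥ := by
        have h1 := ((hub (u ⊔ p)).1 fun d hd => le_trans (hu hd) le_sup_left).1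
        have h2 : p ≤ u ⊔ p := le_sup_right
        calc p = (u ⊔ p) ⊓ p := (inf_eq_right.2 h2).symm
        _ = ⊥ := h1
      refine ⟨r, hrC, ?_, ?_⟩
      · intro d hd
        refine (hub r).2 ⟨?_, le_rfl, fun q hq' => hq q hq' r⟩ d hd
        rw [hp0, inf_bot_eq]
      · intro x hx
        exact ((hub x).1 fun d hd => hx hd).2.1
    · -- unbounded sets: annihilator is principal
      intro D hDsub hnB
      set S : Set (((Fin 1 → A) → A) × ((Fin 1 → A) → A)) :=
        (fun d => ((fun v : Fin 1 → A => v 0 ⊓ d), (fun _ : Fin 1 → A => (⊥ : A)))) '' D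
        with hSdef
      have hterms : ∀ p ∈ S, IsTermFun C 1 p.1 ∧ IsTermFun C 1 p.2 := by
        rintro p ⟨d, hd, rfl⟩
        exact ⟨IsTermFun.inf (IsTermFun.proj 0) (IsTermFun.const (hDsub hd)),
          IsTermFun.const hbot⟩
      obtain ⟨S', hfin, hterms', hsols⟩ := W 1 S hterms
      obtain ⟨p, hpC, r, hrC, Qo, hQC, hiff⟩ := finite_shape hbot hsup hinf hsdiff hfin hterms'
      have hcharS : ∀ v : Fin 1 → A, (v ∈ SolSet S ↔ ∀ d ∈ D, v 0 ⊓ d = ⊥) := by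
        intro v
        constructor
        · intro h d hd
          exact h _ ⟨d, hd, rfl⟩
        · rintro h q ⟨d, hd, rfl⟩
          exact h d hd
      have hchar : ∀ x : A, (∀ d ∈ D, x ⊓ d = ⊥) ↔
          (x ⊓ p = ⊥ ∧ r ≤ x ∧ ∀ q, Qo = some q → x ≤ q) := by
        intro x
        have h1 := hiff (fun _ => x)
        rw [hsols] at h1
        exact (hcharS (fun _ => x)).symm.trans h1
      have hr0 : r = ⊥ := le_bot_iff.1 ((hchar ⊥).1 (fun d _ => bot_inf_eq d)).2.1
      cases Qo with
      | none =>
        exfalso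
        refine hnB ⟨p, ?_⟩
        intro d hd
        have hmem : ∀ e ∈ D, (d \ p) ⊓ e = ⊥ := by
          exact (hchar (d \ p)).2 ⟨inf_sdiff_self_left, hr0 ▸ bot_le, none_cond⟩
        have h1 := hmem d hd
        rw [inf_eq_left.2 (sdiff_le : d \ p ≤ d)] at h1
        exact sdiff_eq_bot_iff.1 h1
      | some q =>
        refine ⟨q \ p, hsdiff q (hQC q rfl) p hpC, ?_⟩
        ext x
        simp only [Set.mem_setOf_eq]
        rw [hchar x, le_sdiff]
        constructor
        · rintro ⟨h1, _, h3⟩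
          exact ⟨h3 q rfl, disjoint_iff.2 h1⟩
        · rintro ⟨h1, h2⟩
          exact ⟨disjoint_iff.1 h2, hr0 ▸ bot_le, some_cond h1⟩
  · rintro ⟨hL, hU⟩
    exact wen_of_conditions hbot hsup hinf hsdiff hL hU
end
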